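/- arXiv:0906.3227 — 7 statements merged into one kernel-verified Lean document; each statement's English description precedes it below -/
import Mathlib

section
/- Every cellular automaton is simulated by some one-way cellular automaton: for every CA (T,g) there exist a finite set S and a one-way local rule h : S³ → S such that the CA (S,h) simulates (T,g). -/
/-- Global map of a one-dimensional radius-1 cellular automaton with local rule `f`. -/
def globalMap {S : Type*} (f : S → S → S → S) (c : ℤ → S) : ℤ → S :=
  fun i => f (c (i - 1)) (c i) (c (i + 1))

/-- The shift `σ^s` (by `s ∈ ℤ`): `σ^s(c)(i) = c(i + s)`. -/
def shiftBy {S : Type*} (s : ℤ) (c : ℤ → S) : ℤ → S :=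
  fun i => c (i + s)

/-- `x ∈ e⁻¹(c)`: each length-`m` block of `x` is mapped by `e` to the
corresponding length-`m'` block of `c`. -/
def Decodes {S T : Type*} {m m' : ℕ} (e : (Fin m → S) → (Fin m' → T))
    (x : ℤ → S) (c : ℤ → T) : Prop :=
  ∀ i : ℤ, (e fun j => x (i * (m : ℤ) + (j : ℤ))) = fun (j : Fin m') => c (i * (m' : ℤ) + (j : ℤ))

/-- The CA with local rule `f` simulates the CA with local rule `g`. -/
def Simulates {S T : Type*} (f : S → S → S → S) (g : T → T → T → T) : Prop :=
  ∃ (m m' t t' : ℕ) (s : ℤ) (e : (Fin m → S) → (Fin m' → T)),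
    0 < m ∧ 0 < m' ∧ 0 < t ∧ 0 < t' ∧ Function.Surjective e ∧
    ∀ (c : ℤ → T) (x : ℤ → S), Decodes e x c →
      Decodes e (shiftBy s ((globalMap f)^[t] x)) ((globalMap g)^[t'] c)

/-- A CA is one-way if its local rule does not depend on the third argument. -/
def OneWay {S : Type*} (f : S → S → S → S) : Prop :=
  ∀ x y z z' : S, f x y z = f x y z'

/-- The one-way local rule on pairs simulating `g`. -/
def pairRule {T : Type*} (g : T → T → T → T) :
    (T × T) → (T × T) → (T × T) → (T × T) :=
  fun u v _ => (g u.1 u.2 v.1, g u.2 v.1 v.2)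

lemma pairRule_step {T : Type*} (g : T → T → T → T) (c : ℤ → T) (x : ℤ → T × T)
    (a : ℤ) (hx : ∀ i, x i = (c (2 * i + a), c (2 * i + a + 1))) :
    ∀ i, globalMap (pairRule g) x i =
      (globalMap g c (2 * i + (a - 1)), globalMap g c (2 * i + (a - 1) + 1)) := by
  intro i
  simp only [globalMap, pairRule, hx]
  have harg : ∀ k l : ℤ, k = l → c k = c l := fun k l h => by rw [h]
  refine Prod.ext ?_ ?_ <;> simp only <;>
    · congr 1 <;> (apply harg; ring)

/-- Every cellular automaton is simulated by some one-way cellular automaton. -/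
theorem exists_one_way_simulating
    (T : Type) [Fintype T] (g : T → T → T → T) :
    ∃ (S : Type) (_ : Fintype S) (h : S → S → S → S),
      OneWay h ∧ Simulates h g := by
  classical
  refine ⟨T × T, inferInstance, pairRule g, fun _ _ _ _ => rfl, ?_⟩
  refine ⟨1, 2, 2, 2, 1,
    (fun x j => if j = 0 then (x 0).1 else (x 0).2), one_pos, two_pos, two_pos, two_pos, ?_, ?_⟩
  · intro y
    refine ⟨fun _ => (y 0, y 1), ?_⟩
    funext j
    fin_cases j <;> simp
  · intro c x hx
    have hx' : ∀ i, x i = (c (2 * i + 0), c (2 * i + 0 + 1)) := by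
      intro i
      have h0 := congrFun (hx i) 0
      have h1 := congrFun (hx i) 1
      simp only [Nat.cast_one, mul_one, Fin.isValue, Fin.val_zero, Int.cast_ofNat_Int] at h0 h1
      norm_num at h0 h1 ⊢
      rw [mul_comm] at h0 h1
      exact Prod.ext (by simpa using h0) (by simpa using h1)
    have h1 := pairRule_step g c x 0 hx'
    have h2 := pairRule_step g (globalMap g c) (globalMap (pairRule g) x) (0 - 1) h1
    intro i
    funext j
    have hit : (globalMap (pairRule g))^[2] x = globalMap (pairRule g) (globalMap (pairRule g) x) := by
      rw [Function.iterate_succ, Function.iterate_one, Function.comp_apply]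
    have hgt : (globalMap g)^[2] c = globalMap g (globalMap g c) := by
      rw [Function.iterate_succ, Function.iterate_one, Function.comp_apply]
    simp only [hit, hgt, shiftBy, Nat.cast_one, mul_one]
    have hval := h2 (i + 1)
    fin_cases j <;>
      simp only [Fin.isValue, Fin.val_zero, Fin.val_one, Int.cast_ofNat_Int] <;>
      norm_num <;>
      rw [hval] <;> norm_num <;> ring_nf
end

section
/- It is sufficient to simulate all one-way cellular automata to be intrinsically universal: if a cellular automaton simulates every one-way cellular automaton (over every finite state set), then it simulates every cellular automaton. -/
/- ### Auxiliary lemmas -/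

lemma shiftBy_shiftBy {S : Type*} (a b : ℤ) (c : ℤ → S) :
    shiftBy a (shiftBy b c) = shiftBy (a + b) c := by
  funext i; simp only [shiftBy]; ring_nf

lemma globalMap_shiftBy {S : Type*} (g : S → S → S → S) (s : ℤ) (c : ℤ → S) :
    globalMap g (shiftBy s c) = shiftBy s (globalMap g c) := by
  funext i
  simp only [globalMap, shiftBy]
  rw [show i + s - 1 = i - 1 + s by ring, show i + s + 1 = i + 1 + s by ring]

lemma globalMap_iterate_shiftBy {S : Type*} (g : S → S → S → S) (n : ℕ) (s : ℤ) (c : ℤ → S) :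
    (globalMap g)^[n] (shiftBy s c) = shiftBy s ((globalMap g)^[n] c) := by
  induction n with
  | zero => rfl
  | succ n ih =>
      rw [Function.iterate_succ_apply', Function.iterate_succ_apply', ih, globalMap_shiftBy]

/-- Pack two consecutive cells of a configuration into one. -/
def pack {T : Type*} (c : ℤ → T) : ℤ → T × T := fun i => (c (2 * i), c (2 * i + 1))

/-- One-way local rule on pairs simulating `g` (with a left shift). -/
def hrule {T : Type*} (g : T → T → T → T) : T × T → T × T → T × T → T × T :=
  fun p q _ => (g p.1 p.2 q.1, g p.2 q.1 q.2)

lemma hrule_oneWay {T : Type*} (g : T → T → T → T) : OneWay (hrule g) := by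
  intro x y z z'; rfl

lemma hrule_step {T : Type*} (g : T → T → T → T) (c : ℤ → T) :
    globalMap (hrule g) (pack c) = pack (shiftBy (-1) (globalMap g c)) := by
  funext i
  simp only [globalMap, hrule, pack, shiftBy, Prod.mk.injEq]
  constructor <;> (congr 1 <;> ring_nf)

lemma hrule_iterate {T : Type*} (g : T → T → T → T) (n : ℕ) (c : ℤ → T) :
    (globalMap (hrule g))^[n] (pack c) = pack (shiftBy (-(n : ℤ)) ((globalMap g)^[n] c)) := by
  induction n generalizing c with
  | zero =>
      simp only [Function.iterate_zero, id_eq, Nat.cast_zero, neg_zero]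
      funext i; simp [pack, shiftBy]
  | succ n ih =>
      rw [Function.iterate_succ_apply, hrule_step, ih, globalMap_iterate_shiftBy,
        shiftBy_shiftBy, Function.iterate_succ_apply]
      push_cast; ring_nf

/-- Iterating a one-shot simulation statement. -/
lemma decodes_iter {S T : Type*} {m m' : ℕ} (e : (Fin m → S) → (Fin m' → T))
    (f : S → S → S → S) (g : T → T → T → T) (t t' : ℕ) (s : ℤ)
    (h : ∀ (c : ℤ → T) (x : ℤ → S), Decodes e x c →
      Decodes e (shiftBy s ((globalMap f)^[t] x)) ((globalMap g)^[t'] c)) :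
    ∀ (k : ℕ) (c : ℤ → T) (x : ℤ → S), Decodes e x c →
      Decodes e (shiftBy ((k : ℤ) * s) ((globalMap f)^[k * t] x)) ((globalMap g)^[k * t'] c) := by
  intro k
  induction k with
  | zero =>
      intro c x hx
      have h0 : shiftBy 0 x = x := by funext i; simp [shiftBy]
      simp only [Nat.cast_zero, zero_mul, Nat.zero_mul, Function.iterate_zero, id_eq, h0]
      exact hx
  | succ k ih =>
      intro c x hx
      have h1 := h ((globalMap g)^[k * t'] c) (shiftBy ((k : ℤ) * s) ((globalMap f)^[k * t] x))
        (ih c x hx)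
      rw [globalMap_iterate_shiftBy, shiftBy_shiftBy, ← Function.iterate_add_apply,
        ← Function.iterate_add_apply] at h1
      have e1 : t + k * t = (k + 1) * t := by ring
      have e2 : t' + k * t' = (k + 1) * t' := by ring
      have e3 : s + (k : ℤ) * s = ((k : ℕ) + 1 : ℕ) * s := by push_cast; ring
      rw [e1, e2, e3] at h1
      exact h1

/-- Unpack a block of pairs into a block of twice the length. -/
def unpack {T : Type*} {m' : ℕ} (w : Fin m' → T × T) : Fin (2 * m') → T :=
  fun j => if j.val % 2 = 0 then (w ⟨j.val / 2, by have := j.isLt; omega⟩).1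
    else (w ⟨j.val / 2, by have := j.isLt; omega⟩).2

lemma unpack_surjective {T : Type*} {m' : ℕ} :
    Function.Surjective (unpack (T := T) (m' := m')) := by
  intro w
  refine ⟨fun j => (w ⟨2 * j.val, by have := j.isLt; omega⟩, w ⟨2 * j.val + 1, by have := j.isLt; omega⟩), ?_⟩
  funext j
  simp only [unpack]
  split
  · congr 1; ext; simp; omega
  · congr 1; ext; simp; omega

lemma decodes_unpack_iff {S T : Type*} {m m' : ℕ} (e : (Fin m → S) → (Fin m' → T × T))
    (x : ℤ → S) (c : ℤ → T) :
    Decodes (fun v => unpack (e v)) x c ↔ Decodes e x (pack c) := by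
  constructor
  · intro hd i
    funext j
    have h1 := congrFun (hd i) ⟨2 * j.val, by have := j.isLt; omega⟩
    have h2 := congrFun (hd i) ⟨2 * j.val + 1, by have := j.isLt; omega⟩
    simp only [unpack] at h1 h2
    rw [if_pos (by omega)] at h1
    rw [if_neg (by omega)] at h2
    have hj1 : (⟨2 * j.val / 2, by have := j.isLt; omega⟩ : Fin m') = j := by
      ext; simp only [Fin.val_mk]; omega
    have hj2 : (⟨(2 * j.val + 1) / 2, by have := j.isLt; omega⟩ : Fin m') = j := by
      ext; simp only [Fin.val_mk]; omega
    rw [hj1] at h1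
    rw [hj2] at h2
    simp only [pack]
    ext
    · rw [h1]; congr 1; push_cast; try ring
    · rw [h2]; congr 1; push_cast; try ring
  · intro hd i
    funext j
    have h1 := congrFun (hd i) ⟨j.val / 2, by have := j.isLt; omega⟩
    simp only [unpack]
    rcases Nat.mod_two_eq_zero_or_one j.val with he | ho
    · rw [if_pos he, h1]
      simp only [pack, Fin.val_mk]
      congr 1
      have key : i * ((2 * m' : ℕ) : ℤ) = 2 * (i * ((m' : ℕ) : ℤ)) := by push_cast; ring
      rw [key]
      generalize i * ((m' : ℕ) : ℤ) = K
      omega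
    · rw [if_neg (by omega), h1]
      simp only [pack, Fin.val_mk]
      congr 1
      have key : i * ((2 * m' : ℕ) : ℤ) = 2 * (i * ((m' : ℕ) : ℤ)) := by push_cast; ring
      rw [key]
      generalize i * ((m' : ℕ) : ℤ) = K
      omega

/-- Absorb a shift of a whole number of blocks on the decoded side into the encoded side. -/
lemma decodes_absorb_shift {S T : Type*} {m M : ℕ} (e : (Fin m → S) → (Fin M → T))
    (y : ℤ → S) (b : ℤ → T) (a : ℕ)
    (h : Decodes e y (shiftBy (-((a : ℤ) * M)) b)) :
    Decodes e (shiftBy ((a : ℤ) * m) y) b := by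
  intro i
  have hblk : (fun j : Fin m => shiftBy ((a : ℤ) * m) y (i * (m : ℤ) + (j : ℤ)))
      = fun j : Fin m => y ((i + a) * (m : ℤ) + (j : ℤ)) := by
    funext j; simp only [shiftBy]; congr 1; ring
  rw [hblk, h (i + a)]
  funext j
  simp only [shiftBy]
  congr 1
  ring

/-- If a cellular automaton simulates every one-way cellular automaton, then it
simulates every cellular automaton, i.e. it is intrinsically universal. -/
theorem simulates_all_one_way_implies_universal
    (S : Type) [Fintype S] (f : S → S → S → S)
    (huniv : ∀ (T : Type) [Fintype T] (g : T → T → T → T), OneWay g → Simulates f g) :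
    ∀ (T : Type) [Fintype T] (g : T → T → T → T), Simulates f g := by
  intro T _ g
  obtain ⟨m, m', t, t', s, e, hm, hm', ht, ht', hsurj, hsim⟩ :=
    huniv (T × T) (hrule g) (hrule_oneWay g)
  refine ⟨m, 2 * m', 2 * m' * t, 2 * m' * t', ((t' : ℤ) * m) + ((2 * m' : ℕ) : ℤ) * s,
    fun v => unpack (e v), hm, by omega, by positivity, by positivity,
    unpack_surjective.comp hsurj, ?_⟩
  intro c x hx
  have h1 : Decodes e x (pack c) := (decodes_unpack_iff e x c).1 hx
  have h2 := decodes_iter e f (hrule g) t t' s hsim (2 * m') (pack c) x h1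
  rw [hrule_iterate] at h2
  have h3 : Decodes (fun v => unpack (e v)) (shiftBy (((2 * m' : ℕ) : ℤ) * s)
      ((globalMap f)^[2 * m' * t] x))
      (shiftBy (-(((2 * m' * t' : ℕ)) : ℤ)) ((globalMap g)^[2 * m' * t'] c)) :=
    (decodes_unpack_iff e _ _).2 h2
  have hc : (-(((2 * m' * t' : ℕ)) : ℤ)) = -((t' : ℤ) * ((2 * m' : ℕ) : ℤ)) := by
    push_cast; ring
  rw [hc] at h3
  have h4 := decodes_absorb_shift (fun v => unpack (e v)) _ _ t' h3
  rw [shiftBy_shiftBy] at h4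
  exact h4
end

section
/- The sum of an l-encoding and an m-encoding preserves the state bits: if a is an l-encoding of a state s and b is an m-encoding of a state s', then for every digit index 0 ≤ i < k, bit 3+8i+5 of a+b equals s_i, and bit 3+8i+1 of a+b equals s'_i. -/
lemma low_lt_pow {a n : ℕ} (h : a.testBit n = false) : a % 2 ^ (n+1) < 2 ^ n := by
  have h1 : a % 2 ^ (n+1) < 2 ^ (n+1) := Nat.mod_lt _ (Nat.pow_pos (by norm_num))
  have h2 : (a % 2 ^ (n+1)).testBit n = false := by
    simp [Nat.testBit_mod_two_pow, h]
  rw [Nat.testBit_eq_decide_div_mod_eq] at h2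
  by_contra hc
  push_neg at hc
  have hd : a % 2 ^ (n+1) / 2 ^ n = 1 :=
    Nat.div_eq_of_lt_le (by simpa using hc) (by rw [pow_succ] at h1; omega)
  rw [hd] at h2
  simp at h2

lemma testBit_add_succ_of_false {a b : ℕ} (n : ℕ)
    (ha : a.testBit n = false) (hb : b.testBit n = false) :
    (a + b).testBit (n + 1) = xor (a.testBit (n+1)) (b.testBit (n+1)) := by
  have hlt : a % 2 ^ (n+1) + b % 2 ^ (n+1) < 2 ^ (n+1) := by
    have h1 := low_lt_pow ha
    have h2 := low_lt_pow hb
    have e : (2:ℕ) ^ (n+1) = 2 ^ n * 2 := pow_succ 2 n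
    omega
  have hdecomp : a + b = 2 ^ (n+1) * (a / 2 ^ (n+1) + b / 2 ^ (n+1))
      + (a % 2 ^ (n+1) + b % 2 ^ (n+1)) := by
    rw [Nat.mul_add]
    have := Nat.div_add_mod a (2 ^ (n+1))
    have := Nat.div_add_mod b (2 ^ (n+1))
    omega
  rw [hdecomp, Nat.testBit_two_pow_mul_add _ hlt]
  simp only [lt_irrefl, if_false, Nat.sub_self]
  rw [Nat.testBit_zero, Nat.testBit_eq_decide_div_mod_eq, Nat.testBit_eq_decide_div_mod_eq]
  rw [Nat.add_mod]
  have h1 : a / 2 ^ (n+1) % 2 < 2 := Nat.mod_lt _ (by norm_num)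
  have h2 : b / 2 ^ (n+1) % 2 < 2 := Nat.mod_lt _ (by norm_num)
  rcases (by omega : a / 2 ^ (n+1) % 2 = 0 ∨ a / 2 ^ (n+1) % 2 = 1) with h | h <;>
    rcases (by omega : b / 2 ^ (n+1) % 2 = 0 ∨ b / 2 ^ (n+1) % 2 = 1) with h' | h' <;>
      simp [h, h']


/-- With `L = 8*k+7`, a number `a < 2^L` is an *l-encoding* of the state
`s ∈ {0,1}^k` if bit `L-1 = 0`, bit `L-2 = 1`, bit `L-3 = 0`, bit `L-4 = 1`,
and in each digit block `i` (bits `3+8*i, …, 3+8*i+7`): `b5 = s i` and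
`b4 = b1 = b0 = 0`, all remaining bits being arbitrary. -/
def IsLEnc (k : ℕ) (s : Fin k → Bool) (a : ℕ) : Prop :=
  a < 2 ^ (8 * k + 7) ∧
  a.testBit (8 * k + 6) = false ∧ a.testBit (8 * k + 5) = true ∧
  a.testBit (8 * k + 4) = false ∧ a.testBit (8 * k + 3) = true ∧
  ∀ i : Fin k,
    a.testBit (3 + 8 * (i : ℕ) + 5) = s i ∧
    a.testBit (3 + 8 * (i : ℕ) + 4) = false ∧
    a.testBit (3 + 8 * (i : ℕ) + 1) = false ∧
    a.testBit (3 + 8 * (i : ℕ)) = false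

/-- With `L = 8*k+7`, a number `b < 2^L` is an *m-encoding* of the state
`s' ∈ {0,1}^k` if bits `L-1, L-2, L-3, L-4` are all `0`, and in each digit
block `i`: `b1 = s' i` and `b5 = b4 = b0 = 0`, all remaining bits arbitrary. -/
def IsMEnc (k : ℕ) (s' : Fin k → Bool) (b : ℕ) : Prop :=
  b < 2 ^ (8 * k + 7) ∧
  b.testBit (8 * k + 6) = false ∧ b.testBit (8 * k + 5) = false ∧
  b.testBit (8 * k + 4) = false ∧ b.testBit (8 * k + 3) = false ∧
  ∀ i : Fin k,
    b.testBit (3 + 8 * (i : ℕ) + 1) = s' i ∧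
    b.testBit (3 + 8 * (i : ℕ) + 5) = false ∧
    b.testBit (3 + 8 * (i : ℕ) + 4) = false ∧
    b.testBit (3 + 8 * (i : ℕ)) = false

/-- With `L = 8*k+7`, a number `ℓ < 2^L` is an *l⁰-form* for the state
`t ∈ {0,1}^k` if bit `L-1 = 0`, bit `L-2 = 1`, bit `L-3 = 0`, bit `1 = 1`,
bit `0 = 0`, and in each digit block `i`: `b6 = 1 - t i`, `b5 = 1`, `b2 = 1`
and `b1 = 1`, all remaining bits arbitrary. -/
def IsL0Form (k : ℕ) (t : Fin k → Bool) (l : ℕ) : Prop :=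
  l < 2 ^ (8 * k + 7) ∧
  l.testBit (8 * k + 6) = false ∧ l.testBit (8 * k + 5) = true ∧
  l.testBit (8 * k + 4) = false ∧
  l.testBit 1 = true ∧ l.testBit 0 = false ∧
  ∀ i : Fin k,
    l.testBit (3 + 8 * (i : ℕ) + 6) = !(t i) ∧
    l.testBit (3 + 8 * (i : ℕ) + 5) = true ∧
    l.testBit (3 + 8 * (i : ℕ) + 2) = true ∧
    l.testBit (3 + 8 * (i : ℕ) + 1) = true

/-- The sum of an l-encoding of `s` and an m-encoding of `s'` has bit
`3+8*i+5` equal to `s i` and bit `3+8*i+1` equal to `s' i`, for every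
digit index `i < k`. -/
theorem sum_l_m_encoding_preserves_state_bits
    (k : ℕ) (hk : 1 ≤ k) (s s' : Fin k → Bool) (a b : ℕ)
    (ha : IsLEnc k s a) (hb : IsMEnc k s' b) :
    ∀ i : Fin k,
      (a + b).testBit (3 + 8 * (i : ℕ) + 5) = s i ∧
      (a + b).testBit (3 + 8 * (i : ℕ) + 1) = s' i := by
  
  intro i
  obtain ⟨-, -, -, -, -, hablk⟩ := ha
  obtain ⟨-, -, -, -, -, hbblk⟩ := hb
  obtain ⟨ha5, ha4, ha1, ha0⟩ := hablk i
  obtain ⟨hb1, hb5, hb4, hb0⟩ := hbblk i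
  constructor
  · have h := testBit_add_succ_of_false (3 + 8 * (i : ℕ) + 4) ha4 hb4
    rw [show 3 + 8 * (i : ℕ) + 4 + 1 = 3 + 8 * (i : ℕ) + 5 by omega] at h
    rw [h, ha5, hb5]
    simp
  · have h := testBit_add_succ_of_false (3 + 8 * (i : ℕ)) ha0 hb0
    rw [show 3 + 8 * (i : ℕ) + 1 = 3 + 8 * (i : ℕ) + 0 + 1 by omega]
    rw [h, hb1]
    rw [show 3 + 8 * (i : ℕ) + 0 + 1 = 3 + 8 * (i : ℕ) + 1 by omega, ha1]
    simp
end

section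
/- The sum of an l-encoding and an m-encoding has a recognizable header: if a is an l-encoding of some state and b is an m-encoding of some state, then bit L−1 of a+b is 0, bit L−2 of a+b is 1, and exactly one of bits L−3 and L−4 of a+b is 1; equivalently, 2^{L−2}+2^{L−4} ≤ a+b < 2^{L−2}+2^{L−3}+2^{L−4}. -/
/-- The sum of an l-encoding and an m-encoding has a recognizable header: bit
`L-1` is `0`, bit `L-2` is `1`, exactly one of bits `L-3` and `L-4` is `1`;
equivalently `2^(L-2) + 2^(L-4) ≤ a + b < 2^(L-2) + 2^(L-3) + 2^(L-4)`. -/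
theorem sum_l_m_encoding_header
    (k : ℕ) (hk : 1 ≤ k) (s s' : Fin k → Bool) (a b : ℕ)
    (ha : IsLEnc k s a) (hb : IsMEnc k s' b) :
    (a + b).testBit (8 * k + 6) = false ∧
    (a + b).testBit (8 * k + 5) = true ∧
    ((a + b).testBit (8 * k + 4) ≠ (a + b).testBit (8 * k + 3)) ∧
    (2 ^ (8 * k + 5) + 2 ^ (8 * k + 3) ≤ a + b ∧
      a + b < 2 ^ (8 * k + 5) + 2 ^ (8 * k + 4) + 2 ^ (8 * k + 3)) := by
  obtain ⟨ha7, ha6, ha5, ha4, ha3, -⟩ := ha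
  obtain ⟨hb7, hb6, hb5, hb4, hb3, -⟩ := hb
  obtain ⟨P, hPdef⟩ : ∃ P, P = 2 ^ (8 * k + 3) := ⟨_, rfl⟩
  have hP0 : 0 < P := by rw [hPdef]; positivity
  have tb : ∀ (n j : ℕ), n.testBit (8 * k + 3 + j) =
      decide (n / P / 2 ^ j % 2 = 1) := by
    intro n j
    rw [Nat.testBit_eq_decide_div_mod_eq, Nat.div_div_eq_div_mul, hPdef, ← pow_add]
  have e4 : 8 * k + 4 = 8 * k + 3 + 1 := by ring
  have e5 : 8 * k + 5 = 8 * k + 3 + 2 := by ring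
  have e6 : 8 * k + 6 = 8 * k + 3 + 3 := by ring
  have e3 : 8 * k + 3 = 8 * k + 3 + 0 := by ring
  have h16 : (2 : ℕ) ^ (8 * k + 7) = 16 * P := by
    rw [hPdef, show 8 * k + 7 = 8 * k + 3 + 4 by ring, pow_add]; ring
  rw [h16] at ha7 hb7
  rw [e6, tb] at ha6 hb6
  rw [e5, tb] at ha5 hb5
  rw [e4, tb] at ha4 hb4
  rw [e3, tb] at ha3 hb3
  simp only [decide_eq_true_eq, decide_eq_false_iff_not, pow_zero, pow_one,
    Nat.div_one] at ha6 ha5 ha4 ha3 hb6 hb5 hb4 hb3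
  -- a / P = 5
  have hqa16 : a / P < 16 := Nat.div_lt_of_lt_mul (by omega)
  have hqa : a / P = 5 := by
    rw [show (2:ℕ) ^ 2 = 4 from rfl] at ha5
    rw [show (2:ℕ) ^ 3 = 8 from rfl] at ha6
    generalize hq : a / P = q at ha3 ha4 ha5 ha6 hqa16 ⊢
    omega
  have hqb16 : b / P < 16 := Nat.div_lt_of_lt_mul (by omega)
  have hqb : b / P = 0 := by
    rw [show (2:ℕ) ^ 2 = 4 from rfl] at hb5
    rw [show (2:ℕ) ^ 3 = 8 from rfl] at hb6
    generalize hq : b / P = q at hb3 hb4 hb5 hb6 hqb16 ⊢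
    omega
  have hbP : b < P := by
    have h := Nat.div_add_mod b P
    rw [hqb, Nat.mul_zero, Nat.zero_add] at h
    have := Nat.mod_lt b hP0
    omega
  have haP := Nat.div_add_mod a P
  have haP' : a % P < P := Nat.mod_lt a hP0
  rw [hqa] at haP
  have h45 : (2 : ℕ) ^ (8 * k + 4) = 2 * P := by
    rw [hPdef, e4, pow_add]; ring
  have h55 : (2 : ℕ) ^ (8 * k + 5) = 4 * P := by
    rw [hPdef, e5, pow_add]; ring
  have hlo : 5 * P ≤ a + b := by omega
  have hhi : a + b < 7 * P := by omega
  have hq1 : 5 ≤ (a + b) / P := (Nat.le_div_iff_mul_le hP0).2 (by omega)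
  have hq2 : (a + b) / P < 7 := Nat.div_lt_of_lt_mul (by omega)
  have hq : (a + b) / P = 5 ∨ (a + b) / P = 6 := by omega
  refine ⟨?_, ?_, ?_, by omega, by omega⟩
  · rw [e6, tb]
    rcases hq with h | h <;> rw [h] <;> norm_num
  · rw [e5, tb]
    rcases hq with h | h <;> rw [h] <;> norm_num
  · rw [e4, tb, e3, tb]
    rcases hq with h | h <;> rw [h] <;> norm_num
end

section
/- The sum of an l-encoding and an m-encoding contains the whole information about the two encoded states: if a is an l-encoding of s, a' is an l-encoding of σ, b is an m-encoding of s', b' is an m-encoding of σ', and a+b = a'+b', then s = σ and s' = σ'. -/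
lemma carry_free (a b p : ℕ) (hap : a.testBit p = false)
    (hbp : b.testBit p = false) (hbp1 : b.testBit (p+1) = false) :
    (a + b).testBit (p+1) = a.testBit (p+1) := by
  have hp : (0:ℕ) < 2^p := pow_pos two_pos p
  have hpow : (2:ℕ)^(p+1) = 2^p * 2 := pow_succ 2 p
  have key : ∀ n : ℕ, n.testBit p = false → n % (2^p * 2) < 2^p := by
    intro n hn
    rw [Nat.testBit_eq_decide_div_mod_eq] at hn
    simp only [decide_eq_false_iff_not] at hn
    have h1 : n % (2^p * 2) / 2^p = n / 2^p % 2 :=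
      Nat.mod_mul_right_div_self n (2^p) 2
    have h2 : n / 2^p % 2 = 0 := by omega
    have h3 : n % (2^p * 2) / 2^p = 0 := h1.trans h2
    exact (Nat.div_eq_zero_iff.mp h3).resolve_left (Nat.pos_iff_ne_zero.mp hp)
  have hra := key a hap
  have hrb := key b hbp
  have ea := Nat.div_add_mod a (2^p * 2)
  have eb := Nat.div_add_mod b (2^p * 2)
  have h2 : (0:ℕ) < 2^p * 2 := by omega
  have hlt : a % (2^p * 2) + b % (2^p * 2) < 2^p * 2 := by omega
  have hdiv : (a+b)/(2^p * 2) = a / (2^p * 2) + b / (2^p * 2) := by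
    have hab : a + b = (2^p * 2) * (a / (2^p * 2) + b / (2^p * 2))
        + (a % (2^p * 2) + b % (2^p * 2)) := by rw [Nat.mul_add]; omega
    rw [hab, Nat.mul_add_div h2, Nat.div_eq_of_lt hlt, Nat.add_zero]
  rw [Nat.testBit_eq_decide_div_mod_eq] at hbp1 ⊢
  rw [Nat.testBit_eq_decide_div_mod_eq]
  simp only [decide_eq_false_iff_not, hpow] at hbp1 ⊢
  rw [hdiv, decide_eq_decide]
  omega

lemma sum_bits (k : ℕ) (st st' : Fin k → Bool) (x y : ℕ)
    (hx : IsLEnc k st x) (hy : IsMEnc k st' y) (i : Fin k) :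
    (x + y).testBit (3 + 8 * (i : ℕ) + 5) = st i ∧
    (x + y).testBit (3 + 8 * (i : ℕ) + 1) = st' i := by
  obtain ⟨-, -, -, -, -, hxi⟩ := hx
  obtain ⟨-, -, -, -, -, hyi⟩ := hy
  obtain ⟨x5, x4, x1, x0⟩ := hxi i
  obtain ⟨y1, y5, y4, y0⟩ := hyi i
  constructor
  · have h := carry_free x y (3 + 8 * (i : ℕ) + 4) x4 y4 y5
    rwa [x5] at h
  · have h := carry_free y x (3 + 8 * (i : ℕ)) y0 x0 x1
    rw [Nat.add_comm y x] at h
    rwa [y1] at h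

/-- The sum of an l-encoding and an m-encoding determines both encoded states. -/
theorem sum_l_m_encoding_injective_on_states
    (k : ℕ) (hk : 1 ≤ k) (s σ s' σ' : Fin k → Bool) (a a' b b' : ℕ)
    (ha : IsLEnc k s a) (ha' : IsLEnc k σ a')
    (hb : IsMEnc k s' b) (hb' : IsMEnc k σ' b')
    (hsum : a + b = a' + b') :
    s = σ ∧ s' = σ' := by
  constructor
  · funext i
    have h1 := (sum_bits k s s' a b ha hb i).1
    have h2 := (sum_bits k σ σ' a' b' ha' hb' i).1
    rw [← h1, hsum, h2]
  · funext i
    have h1 := (sum_bits k s s' a b ha hb i).2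
    have h2 := (sum_bits k σ σ' a' b' ha' hb' i).2
    rw [← h1, hsum, h2]
end

section
/- Existence of a suitable first-block rule value: for every u < 2^L whose bit L−1 is 0, bit L−2 is 1, and exactly one of whose bits L−3 and L−4 is 1, and for every state t ∈ {0,1}^k, there exists a natural number r < 2^L with: bit L−1 of r equal to 1, bit L−2 equal to 0, bit 2 equal to 1, bits 1 and 0 equal to 0, and in each digit block i: b7 = 1−t_i, b6 = 1, b3 = 1, b2 = 1 (in particular r is even), such that r+u ≥ 2^L and r+u−2^L is an m-encoding of t. Moreover, for any such r, the number r/2 is an l⁰-form for t. -/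
def blockR (b U c : ℕ) : ℕ :=
  let x01 := (2*b + 4 - (128*(1-b) + 76 + U + c) % 4) % 4
  let x45 := (4 - ((128*(1-b) + 76 + U + c + x01) / 16) % 4) % 4
  128 * (1 - b) + 76 + x01 + 16 * x45

theorem blockR_lt (b U c : ℕ) : blockR b U c < 256 := by unfold blockR; simp only []; omega

theorem blockR_spec (b U c : ℕ) (hb : b ≤ 1) :
    blockR b U c / 128 % 2 = 1 - b ∧
    blockR b U c / 64 % 2 = 1 ∧
    blockR b U c / 8 % 2 = 1 ∧
    blockR b U c / 4 % 2 = 1 ∧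
    (blockR b U c + U + c) % 2 = 0 ∧
    (blockR b U c + U + c) / 2 % 2 = b ∧
    (blockR b U c + U + c) / 16 % 2 = 0 ∧
    (blockR b U c + U + c) / 32 % 2 = 0 := by
  unfold blockR; simp only []; rcases (show b = 0 ∨ b = 1 by omega) with rfl | rfl <;> omega

def carrySeq (T : ℕ → ℕ) (u : ℕ) : ℕ → ℕ
  | 0 => (u % 8 + 4) / 8
  | i + 1 => (blockR (T i) (u / 2 ^ (3 + 8*i) % 256) (carrySeq T u i)
      + u / 2 ^ (3 + 8*i) % 256 + carrySeq T u i) / 256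

def rSeq (T : ℕ → ℕ) (u : ℕ) : ℕ → ℕ
  | 0 => 4
  | i + 1 => rSeq T u i + blockR (T i) (u / 2 ^ (3 + 8*i) % 256) (carrySeq T u i) * 2 ^ (3 + 8*i)

def mSeq (T : ℕ → ℕ) (u : ℕ) : ℕ → ℕ
  | 0 => (u % 8 + 4) % 8
  | i + 1 => mSeq T u i + ((blockR (T i) (u / 2 ^ (3 + 8*i) % 256) (carrySeq T u i)
      + u / 2 ^ (3 + 8*i) % 256 + carrySeq T u i) % 256) * 2 ^ (3 + 8*i)

theorem carrySeq_le (T : ℕ → ℕ) (u : ℕ) : ∀ n, carrySeq T u n ≤ 1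
  | 0 => by simp [carrySeq]; omega
  | n + 1 => by
      have h1 := blockR_lt (T n) (u / 2 ^ (3 + 8*n) % 256) (carrySeq T u n)
      have h2 := carrySeq_le T u n
      have h3 : u / 2 ^ (3 + 8*n) % 256 < 256 := Nat.mod_lt _ (by norm_num)
      simp only [carrySeq]; omega

theorem rSeq_lt (T : ℕ → ℕ) (u : ℕ) : ∀ n, rSeq T u n < 2 ^ (3 + 8*n)
  | 0 => by norm_num [rSeq]
  | n + 1 => by
      have h1 := blockR_lt (T n) (u / 2 ^ (3 + 8*n) % 256) (carrySeq T u n)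
      have h2 := rSeq_lt T u n
      have hp : (2:ℕ) ^ (3 + 8*(n+1)) = 2 ^ (3 + 8*n) * 256 := by
        rw [show 3 + 8*(n+1) = (3 + 8*n) + 8 by omega, pow_add]; norm_num
      simp only [rSeq]; rw [hp]
      have : blockR (T n) (u / 2 ^ (3 + 8*n) % 256) (carrySeq T u n) * 2 ^ (3 + 8*n)
          ≤ 255 * 2 ^ (3 + 8*n) := Nat.mul_le_mul_right _ (by omega)
      nlinarith [pow_pos (by norm_num : (0:ℕ) < 2) (3 + 8*n)]

theorem mSeq_lt (T : ℕ → ℕ) (u : ℕ) : ∀ n, mSeq T u n < 2 ^ (3 + 8*n)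
  | 0 => by norm_num [mSeq]; omega
  | n + 1 => by
      have h2 := mSeq_lt T u n
      have hp : (2:ℕ) ^ (3 + 8*(n+1)) = 2 ^ (3 + 8*n) * 256 := by
        rw [show 3 + 8*(n+1) = (3 + 8*n) + 8 by omega, pow_add]; norm_num
      simp only [mSeq]; rw [hp]
      have : ((blockR (T n) (u / 2 ^ (3 + 8*n) % 256) (carrySeq T u n)
          + u / 2 ^ (3 + 8*n) % 256 + carrySeq T u n) % 256) * 2 ^ (3 + 8*n)
          ≤ 255 * 2 ^ (3 + 8*n) :=
        Nat.mul_le_mul_right _ (by have := Nat.mod_lt (blockR (T n) (u / 2 ^ (3 + 8*n) % 256) (carrySeq T u n)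
          + u / 2 ^ (3 + 8*n) % 256 + carrySeq T u n) (show 0 < 256 by norm_num); omega)
      nlinarith [pow_pos (by norm_num : (0:ℕ) < 2) (3 + 8*n)]

theorem seq_eq (T : ℕ → ℕ) (u : ℕ) : ∀ n,
    rSeq T u n + u % 2 ^ (3 + 8*n) = carrySeq T u n * 2 ^ (3 + 8*n) + mSeq T u n
  | 0 => by simp [rSeq, carrySeq, mSeq]; omega
  | n + 1 => by
      have ih := seq_eq T u n
      set R := blockR (T n) (u / 2 ^ (3 + 8*n) % 256) (carrySeq T u n) with hR
      set U := u / 2 ^ (3 + 8*n) % 256 with hU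
      set c := carrySeq T u n with hc
      have hp : (2:ℕ) ^ (3 + 8*(n+1)) = 2 ^ (3 + 8*n) * 256 := by
        rw [show 3 + 8*(n+1) = (3 + 8*n) + 8 by omega, pow_add]; norm_num
      have hmod : u % (2 ^ (3 + 8*n) * 256) = u % 2 ^ (3 + 8*n) + 2 ^ (3 + 8*n) * U := Nat.mod_mul
      have hS : (R + U + c) % 256 + 256 * ((R + U + c) / 256) = R + U + c := Nat.mod_add_div _ _
      show rSeq T u n + R * 2 ^ (3+8*n) + u % 2 ^ (3 + 8*(n+1)) =
        (R + U + c) / 256 * 2 ^ (3 + 8*(n+1)) + (mSeq T u n + (R + U + c) % 256 * 2 ^ (3+8*n))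
      rw [hp, hmod]
      zify at ih hS ⊢
      linear_combination ih - (2:ℤ) ^ (3 + 8*n) * hS

theorem rSeq_mod (T : ℕ → ℕ) (u : ℕ) :
    ∀ n i, i ≤ n → rSeq T u n % 2 ^ (3 + 8*i) = rSeq T u i % 2 ^ (3 + 8*i) := by
  intro n
  induction n with
  | zero => intro i hi; obtain rfl : i = 0 := Nat.le_zero.mp hi; rfl
  | succ n ih =>
      intro i hi
      rcases Nat.eq_or_lt_of_le hi with h | h
      · subst h; rfl
      · have hi' : i ≤ n := by omega
        obtain ⟨d, hd⟩ : (2:ℕ) ^ (3 + 8*i) ∣ 2 ^ (3 + 8*n) := pow_dvd_pow 2 (by omega)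
        have h0 : blockR (T n) (u / 2 ^ (3 + 8*n) % 256) (carrySeq T u n) * 2 ^ (3 + 8*n)
            % 2 ^ (3 + 8*i) = 0 := by
          rw [hd, show blockR (T n) (u / (2 ^ (3 + 8*i) * d) % 256) (carrySeq T u n)
              * (2 ^ (3 + 8*i) * d)
            = 2 ^ (3 + 8*i) * (blockR (T n) (u / (2 ^ (3 + 8*i) * d) % 256) (carrySeq T u n) * d)
              by ring]
          exact Nat.mul_mod_right _ _
        show (rSeq T u n + blockR (T n) (u / 2 ^ (3 + 8*n) % 256) (carrySeq T u n) * 2 ^ (3 + 8*n))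
            % 2 ^ (3 + 8*i) = _
        rw [Nat.add_mod, h0, Nat.add_zero, Nat.mod_mod_of_dvd _ (dvd_refl _), ih i hi']

theorem mSeq_mod (T : ℕ → ℕ) (u : ℕ) :
    ∀ n i, i ≤ n → mSeq T u n % 2 ^ (3 + 8*i) = mSeq T u i % 2 ^ (3 + 8*i) := by
  intro n
  induction n with
  | zero => intro i hi; obtain rfl : i = 0 := Nat.le_zero.mp hi; rfl
  | succ n ih =>
      intro i hi
      rcases Nat.eq_or_lt_of_le hi with h | h
      · subst h; rfl
      · have hi' : i ≤ n := by omega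
        obtain ⟨d, hd⟩ : (2:ℕ) ^ (3 + 8*i) ∣ 2 ^ (3 + 8*n) := pow_dvd_pow 2 (by omega)
        have h0 : ((blockR (T n) (u / 2 ^ (3 + 8*n) % 256) (carrySeq T u n)
            + u / 2 ^ (3 + 8*n) % 256 + carrySeq T u n) % 256) * 2 ^ (3 + 8*n)
            % 2 ^ (3 + 8*i) = 0 := by
          rw [hd, show ((blockR (T n) (u / (2 ^ (3 + 8*i) * d) % 256) (carrySeq T u n)
              + u / (2 ^ (3 + 8*i) * d) % 256 + carrySeq T u n) % 256) * (2 ^ (3 + 8*i) * d)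
            = 2 ^ (3 + 8*i) * (((blockR (T n) (u / (2 ^ (3 + 8*i) * d) % 256) (carrySeq T u n)
              + u / (2 ^ (3 + 8*i) * d) % 256 + carrySeq T u n) % 256) * d) by ring]
          exact Nat.mul_mod_right _ _
        show (mSeq T u n + ((blockR (T n) (u / 2 ^ (3 + 8*n) % 256) (carrySeq T u n)
            + u / 2 ^ (3 + 8*n) % 256 + carrySeq T u n) % 256) * 2 ^ (3 + 8*n)) % 2 ^ (3 + 8*i) = _
        rw [Nat.add_mod, h0, Nat.add_zero, Nat.mod_mod_of_dvd _ (dvd_refl _), ih i hi']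

theorem rSeq_digit (T : ℕ → ℕ) (u : ℕ) (n i : ℕ) (hi : i < n) :
    rSeq T u n / 2 ^ (3 + 8*i) % 256
      = blockR (T i) (u / 2 ^ (3 + 8*i) % 256) (carrySeq T u i) := by
  have h1 : rSeq T u n / 2 ^ (3 + 8*i) % 256 = rSeq T u n % 2 ^ (3 + 8*(i+1)) / 2 ^ (3 + 8*i) := by
    rw [← Nat.mod_mul_right_div_self, show (2:ℕ) ^ (3 + 8*(i+1)) = 2 ^ (3 + 8*i) * 256 by
      rw [show 3 + 8*(i+1) = (3 + 8*i) + 8 by omega, pow_add]; norm_num]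
  rw [h1, rSeq_mod T u n (i+1) hi, Nat.mod_eq_of_lt (rSeq_lt T u (i+1))]
  show (rSeq T u i + blockR (T i) (u / 2 ^ (3 + 8*i) % 256) (carrySeq T u i) * 2 ^ (3 + 8*i))
      / 2 ^ (3 + 8*i) = _
  rw [Nat.add_mul_div_right _ _ (pow_pos (by norm_num) _), Nat.div_eq_of_lt (rSeq_lt T u i),
    Nat.zero_add]

theorem mSeq_digit (T : ℕ → ℕ) (u : ℕ) (n i : ℕ) (hi : i < n) :
    mSeq T u n / 2 ^ (3 + 8*i) % 256
      = (blockR (T i) (u / 2 ^ (3 + 8*i) % 256) (carrySeq T u i)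
          + u / 2 ^ (3 + 8*i) % 256 + carrySeq T u i) % 256 := by
  have h1 : mSeq T u n / 2 ^ (3 + 8*i) % 256 = mSeq T u n % 2 ^ (3 + 8*(i+1)) / 2 ^ (3 + 8*i) := by
    rw [← Nat.mod_mul_right_div_self, show (2:ℕ) ^ (3 + 8*(i+1)) = 2 ^ (3 + 8*i) * 256 by
      rw [show 3 + 8*(i+1) = (3 + 8*i) + 8 by omega, pow_add]; norm_num]
  rw [h1, mSeq_mod T u n (i+1) hi, Nat.mod_eq_of_lt (mSeq_lt T u (i+1))]
  show (mSeq T u i + ((blockR (T i) (u / 2 ^ (3 + 8*i) % 256) (carrySeq T u i)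
      + u / 2 ^ (3 + 8*i) % 256 + carrySeq T u i) % 256) * 2 ^ (3 + 8*i)) / 2 ^ (3 + 8*i) = _
  rw [Nat.add_mul_div_right _ _ (pow_pos (by norm_num) _), Nat.div_eq_of_lt (mSeq_lt T u i),
    Nat.zero_add]

theorem congr_div_mod {a b : ℕ} (q p : ℕ) (h : a % 2 ^ q = b % 2 ^ q) (hp : p < q) :
    a / 2 ^ p % 2 = b / 2 ^ p % 2 := by
  have h2 : ∀ x : ℕ, x / 2 ^ p % 2 = x % 2 ^ (p+1) / 2 ^ p := fun x => by
    rw [← Nat.mod_mul_right_div_self, ← pow_succ]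
  have hd : (2:ℕ) ^ (p+1) ∣ 2 ^ q := pow_dvd_pow 2 (by omega)
  rw [h2, h2, ← Nat.mod_mod_of_dvd a hd, h, Nat.mod_mod_of_dvd b hd]

/-- Bit pattern required of the first-block rule value `r`: bit `L-1 = 1`,
bit `L-2 = 0`, bit `2 = 1`, bits `1` and `0` equal to `0`, and in each digit
block `i`: `b7 = 1 - t i`, `b6 = 1`, `b3 = 1`, `b2 = 1`. -/
def IsFirstRuleValue (k : ℕ) (t : Fin k → Bool) (r : ℕ) : Prop :=
  r < 2 ^ (8 * k + 7) ∧
  r.testBit (8 * k + 6) = true ∧ r.testBit (8 * k + 5) = false ∧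
  r.testBit 2 = true ∧ r.testBit 1 = false ∧ r.testBit 0 = false ∧
  ∀ i : Fin k,
    r.testBit (3 + 8 * (i : ℕ) + 7) = !(t i) ∧
    r.testBit (3 + 8 * (i : ℕ) + 6) = true ∧
    r.testBit (3 + 8 * (i : ℕ) + 3) = true ∧
    r.testBit (3 + 8 * (i : ℕ) + 2) = true

/-- Existence of a suitable first-block rule value: for every `u < 2^L` with
bit `L-1 = 0`, bit `L-2 = 1` and exactly one of bits `L-3`, `L-4` equal to `1`,
and every state `t`, there is an (even) `r` with the required bit pattern such
that `r + u ≥ 2^L` and `r + u - 2^L` is an m-encoding of `t`; moreover, for any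
such `r`, the number `r / 2` is an l⁰-form for `t`. -/
theorem exists_first_rule_value
    (k : ℕ) (hk : 1 ≤ k) (u : ℕ) (hu : u < 2 ^ (8 * k + 7))
    (h1 : u.testBit (8 * k + 6) = false) (h2 : u.testBit (8 * k + 5) = true)
    (h3 : u.testBit (8 * k + 4) ≠ u.testBit (8 * k + 3))
    (t : Fin k → Bool) :
    (∃ r : ℕ, IsFirstRuleValue k t r ∧ 2 ∣ r ∧
      2 ^ (8 * k + 7) ≤ r + u ∧ IsMEnc k t (r + u - 2 ^ (8 * k + 7))) ∧
    (∀ r : ℕ, IsFirstRuleValue k t r → IsL0Form k t (r / 2)) := by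
  constructor
  · -- existence part
    set T : ℕ → ℕ := fun n => if h : n < k then (t ⟨n, h⟩).toNat else 0 with hT
    have hTle : ∀ n, T n ≤ 1 := by
      intro n; simp only [hT]; split
      · cases t _ <;> simp
      · omega
    have hTi : ∀ i : Fin k, T i = (t i).toNat := by
      intro i; simp only [hT]; rw [dif_pos i.isLt]
    set P : ℕ := 2 ^ (3 + 8*k) with hP
    have hPpos : 0 < P := by rw [hP]; positivity
    have hpow : (2:ℕ) ^ (8*k + 7) = P * 16 := by
      rw [hP, show 8*k + 7 = (3 + 8*k) + 4 by omega, pow_add]; norm_num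
    have hP8 : (2:ℕ) ^ (8*k + 6) = P * 8 := by
      rw [hP, show 8*k + 6 = (3 + 8*k) + 3 by omega, pow_add]; norm_num
    have hP4 : (2:ℕ) ^ (8*k + 5) = P * 4 := by
      rw [hP, show 8*k + 5 = (3 + 8*k) + 2 by omega, pow_add]; norm_num
    have hP2 : (2:ℕ) ^ (8*k + 4) = P * 2 := by
      rw [hP, show 8*k + 4 = (3 + 8*k) + 1 by omega, pow_add]; norm_num
    have hP3 : P = 2 ^ (8*k + 3) := by rw [hP]; congr 1; omega
    set C : ℕ := carrySeq T u k with hC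
    have hCle : C ≤ 1 := carrySeq_le T u k
    obtain ⟨Hu, hHu⟩ : ∃ x : ℕ, u / P = x := ⟨u / P, rfl⟩
    have hHlt : Hu < 16 := by
      rw [← hHu]; exact Nat.div_lt_of_lt_mul (by rw [← hpow]; exact hu)
    rw [Nat.testBit_eq_decide_div_mod_eq, decide_eq_false_iff_not] at h1
    rw [Nat.testBit_eq_decide_div_mod_eq, decide_eq_true_eq] at h2
    have h3' : u / 2 ^ (8*k + 4) % 2 ≠ u / 2 ^ (8*k + 3) % 2 := by
      intro he; exact h3 (by rw [Nat.testBit_eq_decide_div_mod_eq, Nat.testBit_eq_decide_div_mod_eq, he])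
    have e6 : u / 2 ^ (8*k + 6) = Hu / 8 := by
      rw [← hHu, Nat.div_div_eq_div_mul, ← hP8]
    have e5 : u / 2 ^ (8*k + 5) = Hu / 4 := by
      rw [← hHu, Nat.div_div_eq_div_mul, ← hP4]
    have e4 : u / 2 ^ (8*k + 4) = Hu / 2 := by
      rw [← hHu, Nat.div_div_eq_div_mul, ← hP2]
    have e3 : u / 2 ^ (8*k + 3) = Hu := by rw [← hHu, hP3]
    rw [e6] at h1
    rw [e5] at h2
    rw [e4, e3] at h3'
    have hH56 : Hu = 5 ∨ Hu = 6 := by omega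
    set G : ℕ := 16 - Hu - C with hG
    set r : ℕ := rSeq T u k + G * P with hrdef
    set m : ℕ := mSeq T u k with hmdef
    have hrlt' : rSeq T u k < P := by rw [hP]; exact rSeq_lt T u k
    have hmlt : m < P := by rw [hmdef, hP]; exact mSeq_lt T u k
    have hrP : r % P = rSeq T u k := by
      rw [hrdef, Nat.add_mul_mod_self_right, Nat.mod_eq_of_lt hrlt']
    have hrdiv : r / P = G := by
      rw [hrdef, Nat.add_mul_div_right _ _ hPpos, Nat.div_eq_of_lt hrlt', Nat.zero_add]
    have hseq := seq_eq T u k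
    rw [← hP, ← hC, ← hmdef] at hseq
    have hudec : u % P + P * Hu = u := by rw [← hHu]; exact Nat.mod_add_div u P
    have hG16 : C + G + Hu = 16 := by omega
    have hkey : r + u = m + 2 ^ (8*k + 7) := by
      rw [hpow, hrdef]
      zify at hseq hudec hG16 ⊢
      linear_combination - hudec + hseq + (P:ℤ) * hG16
    have hbit_r : ∀ p, p < 3 + 8*k → r / 2 ^ p % 2 = rSeq T u k / 2 ^ p % 2 := by
      intro p hp
      refine congr_div_mod (3 + 8*k) p ?_ hp
      rw [← hP, hrP, Nat.mod_eq_of_lt hrlt']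
    have hbr : ∀ i : ℕ, i < k → ∀ j, j < 8 → ∀ p, p = 3 + 8*i + j →
        r / 2 ^ p % 2
          = blockR (T i) (u / 2 ^ (3 + 8*i) % 256) (carrySeq T u i) / 2 ^ j % 2 := by
      intro i hi j hj p hp
      subst hp
      rw [hbit_r _ (by omega), pow_add, ← Nat.div_div_eq_div_mul]
      refine congr_div_mod 8 j ?_ hj
      rw [show (2:ℕ) ^ 8 = 256 by norm_num, rSeq_digit T u k i hi,
        Nat.mod_eq_of_lt (blockR_lt _ _ _)]
    have hbm : ∀ i : ℕ, i < k → ∀ j, j < 8 → ∀ p, p = 3 + 8*i + j →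
        m / 2 ^ p % 2
          = (blockR (T i) (u / 2 ^ (3 + 8*i) % 256) (carrySeq T u i)
              + u / 2 ^ (3 + 8*i) % 256 + carrySeq T u i) / 2 ^ j % 2 := by
      intro i hi j hj p hp
      subst hp
      rw [hmdef, pow_add, ← Nat.div_div_eq_div_mul]
      refine congr_div_mod 8 j ?_ hj
      rw [show (2:ℕ) ^ 8 = 256 by norm_num]
      exact mSeq_digit T u k i hi
    have rfoot : rSeq T u k % 8 = 4 := by
      have h := rSeq_mod T u k 0 (by omega)
      norm_num at h
      simpa [rSeq] using h
    have hGle : G ≤ 11 := by omega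
    have hrlt : r < 2 ^ (8*k + 7) := by
      rw [hpow]
      have h1 : G * P ≤ 11 * P := Nat.mul_le_mul_right _ hGle
      omega
    refine ⟨r, ⟨hrlt, ?_, ?_, ?_, ?_, ?_, ?_⟩, ?_, ?_, ?_⟩
    · rw [Nat.testBit_eq_decide_div_mod_eq, decide_eq_true_eq, hP8, ← Nat.div_div_eq_div_mul, hrdiv]
      omega
    · rw [Nat.testBit_eq_decide_div_mod_eq, decide_eq_false_iff_not, hP4,
        ← Nat.div_div_eq_div_mul, hrdiv]
      omega
    · rw [Nat.testBit_eq_decide_div_mod_eq, decide_eq_true_eq]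
      have h := hbit_r 2 (by omega)
      norm_num at h ⊢
      omega
    · rw [Nat.testBit_eq_decide_div_mod_eq, decide_eq_false_iff_not]
      have h := hbit_r 1 (by omega)
      norm_num at h ⊢
      omega
    · rw [Nat.testBit_eq_decide_div_mod_eq, decide_eq_false_iff_not]
      have h := hbit_r 0 (by omega)
      norm_num at h ⊢
      omega
    · intro i
      obtain ⟨s128, s64, s8, s4, _, _, _, _⟩ :=
        blockR_spec (T i) (u / 2 ^ (3 + 8*(i:ℕ)) % 256) (carrySeq T u i) (hTle i)
      rw [hTi i] at s128
      refine ⟨?_, ?_, ?_, ?_⟩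
      · rw [Nat.testBit_eq_decide_div_mod_eq, hbr (i:ℕ) i.isLt 7 (by norm_num) _ rfl,
          show (2:ℕ) ^ 7 = 128 by norm_num, hTi i]
        cases ht : t i <;>
          simp only [ht, Bool.toNat_false, Bool.toNat_true, Bool.not_false, Bool.not_true,
            decide_eq_true_eq, decide_eq_false_iff_not] at s128 ⊢ <;>
          omega
      · rw [Nat.testBit_eq_decide_div_mod_eq, decide_eq_true_eq, hbr (i:ℕ) i.isLt 6 (by norm_num) _ rfl,
          show (2:ℕ) ^ 6 = 64 by norm_num]
        omega
      · rw [Nat.testBit_eq_decide_div_mod_eq, decide_eq_true_eq, hbr (i:ℕ) i.isLt 3 (by norm_num) _ rfl,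
          show (2:ℕ) ^ 3 = 8 by norm_num]
        omega
      · rw [Nat.testBit_eq_decide_div_mod_eq, decide_eq_true_eq, hbr (i:ℕ) i.isLt 2 (by norm_num) _ rfl,
          show (2:ℕ) ^ 2 = 4 by norm_num]
        omega
    · have h := hbit_r 0 (by omega)
      norm_num at h
      exact Nat.dvd_of_mod_eq_zero (by omega)
    · omega
    · rw [show r + u - 2 ^ (8*k + 7) = m by omega]
      have hmb : ∀ p, 8*k + 3 ≤ p → m.testBit p = false := by
        intro p hp
        apply Nat.testBit_lt_two_pow
        calc m < 2 ^ (8*k + 3) := by rw [← hP3]; exact hmlt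
          _ ≤ 2 ^ p := Nat.pow_le_pow_right (by norm_num) hp
      refine ⟨?_, hmb _ (by omega), hmb _ (by omega), hmb _ (by omega), hmb _ (by omega), ?_⟩
      · rw [hpow]; omega
      · intro i
        obtain ⟨_, _, _, _, sS0, sS2, sS16, sS32⟩ :=
          blockR_spec (T i) (u / 2 ^ (3 + 8*(i:ℕ)) % 256) (carrySeq T u i) (hTle i)
        rw [hTi i] at sS2
        refine ⟨?_, ?_, ?_, ?_⟩
        · rw [Nat.testBit_eq_decide_div_mod_eq, hbm (i:ℕ) i.isLt 1 (by norm_num) _ rfl,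
            show (2:ℕ) ^ 1 = 2 by norm_num, hTi i]
          cases ht : t i <;>
            simp only [ht, Bool.toNat_false, Bool.toNat_true,
              decide_eq_true_eq, decide_eq_false_iff_not] at sS2 ⊢ <;>
            omega
        · rw [Nat.testBit_eq_decide_div_mod_eq, decide_eq_false_iff_not,
            hbm (i:ℕ) i.isLt 5 (by norm_num) _ rfl, show (2:ℕ) ^ 5 = 32 by norm_num]
          omega
        · rw [Nat.testBit_eq_decide_div_mod_eq, decide_eq_false_iff_not,
            hbm (i:ℕ) i.isLt 4 (by norm_num) _ rfl, show (2:ℕ) ^ 4 = 16 by norm_num]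
          omega
        · rw [Nat.testBit_eq_decide_div_mod_eq, decide_eq_false_iff_not,
            hbm (i:ℕ) i.isLt 0 (by norm_num) _ (by omega), show (2:ℕ) ^ 0 = 1 by norm_num]
          omega
  · -- second part
    intro r hr
    obtain ⟨hlt, hb6, hb5, hc2, hc1, hc0, hblk⟩ := hr
    have hstep : ∀ (x p : ℕ), (x / 2).testBit p = x.testBit (p + 1) :=
      fun x p => (Nat.testBit_succ x p).symm
    refine ⟨lt_of_le_of_lt (Nat.div_le_self r 2) hlt, ?_, ?_, ?_, ?_, ?_, ?_⟩
    · rw [hstep, show 8*k + 6 + 1 = 8*k + 7 by omega]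
      exact Nat.testBit_lt_two_pow hlt
    · rw [hstep, show 8*k + 5 + 1 = 8*k + 6 by omega]; exact hb6
    · rw [hstep, show 8*k + 4 + 1 = 8*k + 5 by omega]; exact hb5
    · rw [hstep, show 1 + 1 = 2 from rfl]; exact hc2
    · rw [hstep, show 0 + 1 = 1 from rfl]; exact hc1
    · intro i
      obtain ⟨p7, p6, p3, p2⟩ := hblk i
      refine ⟨?_, ?_, ?_, ?_⟩
      · rw [hstep, show 3 + 8*(i:ℕ) + 6 + 1 = 3 + 8*(i:ℕ) + 7 by omega]; exact p7
      · rw [hstep, show 3 + 8*(i:ℕ) + 5 + 1 = 3 + 8*(i:ℕ) + 6 by omega]; exact p6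
      · rw [hstep, show 3 + 8*(i:ℕ) + 2 + 1 = 3 + 8*(i:ℕ) + 3 by omega]; exact p3
      · rw [hstep, show 3 + 8*(i:ℕ) + 1 + 1 = 3 + 8*(i:ℕ) + 2 by omega]; exact p2
end

section
/- Chained-block simulation of an arbitrary local rule: for every k ≥ 1 and every function f : {0,1}^k × {0,1}^k → {0,1}^k, there exists a function R : ℕ → ℕ with R(n) even for every 1 ≤ n ≤ N, such that for all states s, s' ∈ {0,1}^k, every l-encoding a of s and every m-encoding b of s', setting u = a+b, m₁ = R(u) + u − (N+1), ℓ = R(u)/2, v = ℓ + 2^{L−1}, m₂ = R(v) + v − (N+1), and l₂ = R(v)/2, the following hold: R(u) + u ≥ N+1; m₁ is an m-encoding of f(s,s'); ℓ is an l⁰-form for f(s,s'); m₂ = 2^{L−1}; and l₂ is an l-encoding of f(s,s'). -/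
namespace CBS

def nb (v : Bool) : ℕ := bif v then 1 else 0

lemma nb_le (v : Bool) : nb v ≤ 1 := by cases v <;> simp [nb]

lemma bit_shift (x p m : ℕ) : (x / 2^p).testBit m = x.testBit (p + m) := by
  simp [Nat.testBit_eq_decide_div_mod_eq, Nat.div_div_eq_div_mul, ← pow_add]

lemma tb_of (n j : ℕ) (v : Bool) (h : n.testBit j = v) :
    n / 2^j % 2 = nb v := by
  cases v <;> simp [Nat.testBit_eq_decide_div_mod_eq, nb] at h ⊢ <;> omega

lemma tb_in (n j : ℕ) (v : Bool) (h : n / 2^j % 2 = nb v) :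
    n.testBit j = v := by
  cases v <;> simp [nb] at h <;> simp [Nat.testBit_eq_decide_div_mod_eq] <;> omega

lemma div_pow_add (x m n : ℕ) : x / 2^(m+n) = x / 2^m / 2^n := by
  rw [pow_add, ← Nat.div_div_eq_div_mul]

lemma sum_digit (g : ℕ → ℕ) (K H i : ℕ) (hg : ∀ i, g i < 256) (hi : i < K) :
    ((∑ x ∈ Finset.range K, g x * 256^x) + 256^K * H) / 256^i % 256 = g i := by
  induction i generalizing g K H with
  | zero =>
    obtain ⟨K', rfl⟩ : ∃ K', K = K' + 1 := ⟨K - 1, by omega⟩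
    rw [Finset.sum_range_succ' (fun x => g x * 256^x) K']
    have hsum : (∑ x ∈ Finset.range K', g (x+1) * 256^(x+1))
        = 256 * ∑ x ∈ Finset.range K', g (x+1) * 256^x := by
      rw [Finset.mul_sum]; exact Finset.sum_congr rfl (fun x _ => by ring)
    have h1 : (∑ x ∈ Finset.range K', g (x+1) * 256^(x+1)) + g 0 * 256^0 + 256^(K'+1) * H
        = g 0 + 256 * ((∑ x ∈ Finset.range K', g (x+1) * 256^x) + 256^K' * H) := by
      rw [hsum]; ring
    rw [h1]
    simp [Nat.add_mul_mod_self_left, Nat.mod_eq_of_lt (hg 0)]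
  | succ i ih =>
    obtain ⟨K', rfl⟩ : ∃ K', K = K' + 1 := ⟨K - 1, by omega⟩
    rw [Finset.sum_range_succ' (fun x => g x * 256^x) K']
    have hsum : (∑ x ∈ Finset.range K', g (x+1) * 256^(x+1))
        = 256 * ∑ x ∈ Finset.range K', g (x+1) * 256^x := by
      rw [Finset.mul_sum]; exact Finset.sum_congr rfl (fun x _ => by ring)
    have h1 : (∑ x ∈ Finset.range K', g (x+1) * 256^(x+1)) + g 0 * 256^0 + 256^(K'+1) * H
        = g 0 + 256 * ((∑ x ∈ Finset.range K', g (x+1) * 256^x) + 256^K' * H) := by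
      rw [hsum]; ring
    rw [h1]
    have h2 : (g 0 + 256 * ((∑ x ∈ Finset.range K', g (x+1) * 256^x) + 256^K' * H)) / 256^(i+1)
        = ((∑ x ∈ Finset.range K', g (x+1) * 256^x) + 256^K' * H) / 256^i := by
      rw [pow_succ, mul_comm (256^i) 256, ← Nat.div_div_eq_div_mul,
        Nat.add_mul_div_left _ _ (by norm_num : (0:ℕ) < 256),
        Nat.div_eq_of_lt (hg 0)]
      simp
    rw [h2]
    exact ih (fun x => g (x+1)) K' H (fun x => hg (x+1)) (by omega)

lemma sum_lt (g : ℕ → ℕ) (K : ℕ) (hg : ∀ i, g i < 256) :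
    (∑ x ∈ Finset.range K, g x * 256^x) < 256^K := by
  induction K with
  | zero => simp
  | succ K ih =>
    rw [Finset.sum_range_succ]
    have := hg K
    have : g K * 256^K ≤ 255 * 256^K := Nat.mul_le_mul_right _ (by omega)
    have h256 : (256:ℕ)^(K+1) = 256 * 256^K := by ring
    omega

lemma base_decomp (K w : ℕ) :
    w = (∑ i ∈ Finset.range K, (w / 256^i % 256) * 256^i) + 256^K * (w / 256^K) := by
  induction K with
  | zero => simp
  | succ K ih =>
    rw [Finset.sum_range_succ]
    have h1 : 256^K * (w / 256^K)
        = (w / 256^K % 256) * 256^K + 256^(K+1) * (w / 256^(K+1)) := by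
      have hmd := Nat.mod_add_div (w / 256^K) 256
      have h2 : w / 256^(K+1) = w / 256^K / 256 := by
        rw [pow_succ, Nat.div_div_eq_div_mul]
      rw [h2]
      calc 256^K * (w / 256^K) = 256^K * (w / 256^K % 256 + 256 * (w / 256^K / 256)) := by
            rw [hmd]
        _ = (w / 256^K % 256) * 256^K + 256^(K+1) * (w / 256^K / 256) := by ring
    omega

lemma pow_split (i : ℕ) : (2:ℕ)^(8*i) = 256^i := by
  rw [show (256:ℕ) = 2^8 by norm_num, ← pow_mul]

lemma digit_testBit (c p : ℕ) (g : ℕ → ℕ) (K H : ℕ) (hc : c < 2^p)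
    (hg : ∀ i, g i < 256) (i j pos : ℕ) (hi : i < K) (hj : j < 8)
    (hpos : pos = p + 8*i + j) :
    (c + 2^p * ((∑ x ∈ Finset.range K, g x * 256^x) + 256^K * H)).testBit pos
      = (g i).testBit j := by
  set S := (∑ x ∈ Finset.range K, g x * 256^x) + 256^K * H with hS
  have h1 : (c + 2^p * S) / 2^p = S := by
    rw [Nat.add_mul_div_left _ _ (Nat.pow_pos (n := p) (by norm_num)),
      Nat.div_eq_of_lt hc]; omega
  have h2 : pos = p + (8*i + j) := by omega
  rw [h2, ← bit_shift, h1, ← bit_shift, pow_split]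
  have h6 : S / 256^i % 256 = g i := sum_digit g K H i hg hi
  rw [show (S / 256^i).testBit j = ((S / 256^i) % 2^8).testBit j by
    rw [Nat.testBit_mod_two_pow]; simp [hj]]
  norm_num [h6]

lemma header_testBit (c p : ℕ) (g : ℕ → ℕ) (K H : ℕ) (hc : c < 2^p)
    (hg : ∀ i, g i < 256) (j pos : ℕ) (hpos : pos = p + 8*K + j) :
    (c + 2^p * ((∑ x ∈ Finset.range K, g x * 256^x) + 256^K * H)).testBit pos
      = H.testBit j := by
  set S := (∑ x ∈ Finset.range K, g x * 256^x) + 256^K * H with hS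
  have h1 : (c + 2^p * S) / 2^p = S := by
    rw [Nat.add_mul_div_left _ _ (Nat.pow_pos (n := p) (by norm_num)),
      Nat.div_eq_of_lt hc]; omega
  have h2 : pos = p + (8*K + j) := by omega
  rw [h2, ← bit_shift, h1, ← bit_shift, pow_split]
  have h5 : S / 256^K = H := by
    rw [hS, Nat.add_mul_div_left _ _ (Nat.pow_pos (n := K) (by norm_num)),
      Nat.div_eq_of_lt (sum_lt g K hg)]
    omega
  rw [h5]

lemma block_read (x i j pos : ℕ) (hj : j < 8) (hpos : pos = 3 + 8*i + j) :
    x.testBit pos = (x/8/256^i % 256).testBit j := by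
  have h2 : pos = 3 + (8*i + j) := by omega
  have h3 : (x/8/256^i % 256).testBit j = (x/8/256^i).testBit j := by
    rw [show (256:ℕ) = 2^8 by norm_num, Nat.testBit_mod_two_pow]; simp [hj]
  rw [h2, ← bit_shift, ← bit_shift, pow_split,
    show (2:ℕ)^3 = 8 by norm_num, h3]

def eC (V t : ℕ) : ℕ := (2*t + 4 - V % 4) % 4
def X0 (V t : ℕ) : ℕ := 76 + 128*(1 - t) + eC V t
def gC (V t : ℕ) : ℕ := (4 - (V + X0 V t)/16 % 4) % 4
def Xd (V t : ℕ) : ℕ := X0 V t + 16 * gC V t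
def Md (V t : ℕ) : ℕ := (V + Xd V t) % 256
def bO (V t : ℕ) : ℕ := (V + Xd V t) / 256

lemma Xd_decomp (V t : ℕ) : ∃ e g, e ≤ 3 ∧ g ≤ 3 ∧
    Xd V t = 76 + 128*(1-t) + e + 16*g :=
  ⟨eC V t, gC V t, by simp only [eC]; omega, by simp only [gC]; omega, rfl⟩

lemma Xd_lt (V t : ℕ) : Xd V t < 256 := by
  obtain ⟨e, g, he, hg, h⟩ := Xd_decomp V t
  have : 128*(1-t) ≤ 128 := by omega
  omega

lemma MB (V t : ℕ) : Md V t + 256 * bO V t = V + Xd V t := Nat.mod_add_div _ _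

lemma bO_le (V t : ℕ) (hV : V ≤ 256) : bO V t ≤ 1 := by
  have := Xd_lt V t; simp only [bO]; omega

lemma Md_lt (V t : ℕ) : Md V t < 256 := Nat.mod_lt _ (by norm_num)

lemma Md_mod4 (V t : ℕ) (ht : t ≤ 1) : Md V t % 4 = 2*t := by
  have hMd : Md V t = (V + Xd V t) % 256 := rfl
  have hXd : Xd V t = X0 V t + 16 * gC V t := rfl
  have hX0 : X0 V t = 76 + 128*(1 - t) + eC V t := rfl
  have heC : eC V t = (2*t + 4 - V % 4) % 4 := rfl
  omega

lemma Md_div16 (V t : ℕ) : Md V t / 16 % 4 = 0 := by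
  have hMd : Md V t = (V + Xd V t) % 256 := rfl
  have hXd : Xd V t = X0 V t + 16 * gC V t := rfl
  have hgC : gC V t = (4 - (V + X0 V t)/16 % 4) % 4 := rfl
  omega

def tN (k : ℕ) (f : (Fin k → Bool) → (Fin k → Bool) → (Fin k → Bool)) (u i : ℕ) : ℕ :=
  if h : i < k then
    nb (f (fun j => u.testBit (8*(j:ℕ)+8)) (fun j => u.testBit (8*(j:ℕ)+4)) ⟨i, h⟩)
  else 0

lemma tN_le (k f u i) : tN k f u i ≤ 1 := by
  unfold tN; split
  · exact nb_le _
  · omega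

def borF (k : ℕ) (f : (Fin k → Bool) → (Fin k → Bool) → (Fin k → Bool)) (u : ℕ) : ℕ → ℕ
  | 0 => if 4 ≤ u % 8 then 1 else 0
  | i+1 => bO (u/8/256^i % 256 + borF k f u i) (tN k f u i)

def XsF (k : ℕ) (f : (Fin k → Bool) → (Fin k → Bool) → (Fin k → Bool)) (u i : ℕ) : ℕ :=
  Xd (u/8/256^i % 256 + borF k f u i) (tN k f u i)

def MsF (k : ℕ) (f : (Fin k → Bool) → (Fin k → Bool) → (Fin k → Bool)) (u i : ℕ) : ℕ :=
  Md (u/8/256^i % 256 + borF k f u i) (tN k f u i)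

def DhF (k : ℕ) (f : (Fin k → Bool) → (Fin k → Bool) → (Fin k → Bool)) (u : ℕ) : ℕ :=
  16 - u/8/256^k % 16 - borF k f u k

def RF (k : ℕ) (f : (Fin k → Bool) → (Fin k → Bool) → (Fin k → Bool)) (n : ℕ) : ℕ :=
  if n.testBit (8*k+6) then 2*((2^(8*k+7) + 2^(8*k+6) - n)/2)
  else 4 + 8*((∑ i ∈ Finset.range k, XsF k f n i * 256^i) + 256^k * DhF k f n)

lemma RF_pos (k f n) (h : n.testBit (8*k+6) = true) :
    RF k f n = 2*((2^(8*k+7) + 2^(8*k+6) - n)/2) := by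
  unfold RF; rw [if_pos h]

lemma RF_neg (k f n) (h : n.testBit (8*k+6) = false) :
    RF k f n = 4 + 8*((∑ i ∈ Finset.range k, XsF k f n i * 256^i) + 256^k * DhF k f n) := by
  unfold RF; rw [if_neg]; rw [h]; simp

lemma borF_le (k f u) : ∀ i, borF k f u i ≤ 1
  | 0 => by simp only [borF]; split <;> omega
  | i+1 => by
      have h1 := borF_le k f u i
      simp only [borF]
      exact bO_le _ _ (by have := Nat.mod_lt (u/8/256^i) (show 0 < 256 by norm_num); omega)

lemma tel (k f u) : ∀ j,
    borF k f u 0 + ∑ i ∈ Finset.range j, (u/8/256^i % 256 + XsF k f u i) * 256^i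
      = (∑ i ∈ Finset.range j, MsF k f u i * 256^i) + borF k f u j * 256^j
  | 0 => by simp
  | j+1 => by
      have key : MsF k f u j + 256 * borF k f u (j+1)
          = (u/8/256^j % 256 + borF k f u j) + XsF k f u j := by
        simp only [MsF, XsF, borF]; exact MB _ _
      calc borF k f u 0 + ∑ i ∈ Finset.range (j+1), (u/8/256^i % 256 + XsF k f u i) * 256^i
          = (borF k f u 0 + ∑ i ∈ Finset.range j, (u/8/256^i % 256 + XsF k f u i) * 256^i)
            + (u/8/256^j % 256 + XsF k f u j) * 256^j := by
            rw [Finset.sum_range_succ]; ring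
        _ = ((∑ i ∈ Finset.range j, MsF k f u i * 256^i) + borF k f u j * 256^j)
            + (u/8/256^j % 256 + XsF k f u j) * 256^j := by rw [tel k f u j]
        _ = (∑ i ∈ Finset.range j, MsF k f u i * 256^i)
            + ((u/8/256^j % 256 + borF k f u j) + XsF k f u j) * 256^j := by ring
        _ = (∑ i ∈ Finset.range j, MsF k f u i * 256^i)
            + (MsF k f u j + 256 * borF k f u (j+1)) * 256^j := by rw [key]
        _ = (∑ i ∈ Finset.range (j+1), MsF k f u i * 256^i)
            + borF k f u (j+1) * 256^(j+1) := by rw [Finset.sum_range_succ, pow_succ]; ring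

lemma sum255 : ∀ K : ℕ, (∑ i ∈ Finset.range K, 255*256^i) + 1 = 256^K
  | 0 => by simp
  | K+1 => by
      rw [Finset.sum_range_succ, pow_succ]
      have := sum255 K
      omega

lemma main_alg (fF x us ms d b0v bkv rv uu Q cc : ℕ)
    (h1 : uu = rv + 8*(us + Q*(5+cc)))
    (h2 : b0v + (us + x) = ms + bkv*Q)
    (h3 : rv + 4 = fF + 8*b0v)
    (h4 : d + (5+cc) + bkv = 16) :
    4 + 8*(x + Q*d) + uu = 128*Q + (fF + 8*ms) := by
  subst h1
  calc 4 + 8*(x + Q*d) + (rv + 8*(us + Q*(5+cc)))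
      = (rv + 4) + 8*((us + x) + Q*(d + (5+cc))) := by ring
    _ = (fF + 8*b0v) + 8*((us + x) + Q*(d + (5+cc))) := by rw [h3]
    _ = fF + 8*((b0v + (us + x)) + Q*(d + (5+cc))) := by ring
    _ = fF + 8*((ms + bkv*Q) + Q*(d + (5+cc))) := by rw [h2]
    _ = fF + 8*ms + 8*(Q*(bkv + (d + (5+cc)))) := by ring
    _ = fF + 8*ms + 8*(Q*16) := by rw [show bkv + (d + (5+cc)) = 16 by omega]
    _ = 128*Q + (fF + 8*ms) := by ring

end CBS



/-- Chained-block simulation of an arbitrary local rule `f` on states: there is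
a rule array `R` (with even values on `[1, N]`, `N = 2^L - 1`) such that for any
l-encoding `a` of `s` and m-encoding `b` of `s'`, setting `u = a + b`,
`m₁ = R u + u - (N+1)`, `ℓ = R u / 2`, `v = ℓ + 2^(L-1)`,
`m₂ = R v + v - (N+1)` and `l₂ = R v / 2`, one has `R u + u ≥ N + 1`, `m₁` is an
m-encoding of `f s s'`, `ℓ` is an l⁰-form for `f s s'`, `m₂ = 2^(L-1)`, and
`l₂` is an l-encoding of `f s s'`. -/
theorem chained_block_simulation
    (k : ℕ) (hk : 1 ≤ k)
    (f : (Fin k → Bool) → (Fin k → Bool) → (Fin k → Bool)) :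
    ∃ R : ℕ → ℕ,
      (∀ n : ℕ, 1 ≤ n → n ≤ 2 ^ (8 * k + 7) - 1 → 2 ∣ R n) ∧
      ∀ (s s' : Fin k → Bool) (a b : ℕ),
        IsLEnc k s a → IsMEnc k s' b →
        R (a + b) + (a + b) ≥ 2 ^ (8 * k + 7) ∧
        IsMEnc k (f s s') (R (a + b) + (a + b) - 2 ^ (8 * k + 7)) ∧
        IsL0Form k (f s s') (R (a + b) / 2) ∧
        R (R (a + b) / 2 + 2 ^ (8 * k + 6)) + (R (a + b) / 2 + 2 ^ (8 * k + 6))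
            - 2 ^ (8 * k + 7) = 2 ^ (8 * k + 6) ∧
        IsLEnc k (f s s')
          (R (R (a + b) / 2 + 2 ^ (8 * k + 6)) / 2) := by
  classical
  refine ⟨CBS.RF k f, ?_, ?_⟩
  · intro n _ _
    unfold CBS.RF
    split
    · exact ⟨_, rfl⟩
    · exact ⟨2 + 4*((∑ i ∈ Finset.range k, CBS.XsF k f n i * 256^i) + 256^k * CBS.DhF k f n),
        by ring⟩
  intro s s' a b hA hB
  obtain ⟨haLT, ha6, ha5, ha4, ha3, haBlk⟩ := hA
  obtain ⟨hbLT, hb6, hb5, hb4, hb3, hbBlk⟩ := hB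
  set u := a + b with hu_def
  have hQpos : 0 < (256:ℕ)^k := Nat.pow_pos (n := _) (by norm_num)
  have hP3 : (2:ℕ)^(8*k+3) = 8*256^k := by rw [pow_add, CBS.pow_split]; ring
  have hP6 : (2:ℕ)^(8*k+6) = 64*256^k := by rw [pow_add, CBS.pow_split]; ring
  have hP7 : (2:ℕ)^(8*k+7) = 128*256^k := by rw [pow_add, CBS.pow_split]; ring
  -- header of a
  have hda4 : a / 2^(8*k+4) = a / 2^(8*k+3) / 2 := by
    rw [show 8*k+4 = (8*k+3)+1 by omega, CBS.div_pow_add]; norm_num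
  have hda5 : a / 2^(8*k+5) = a / 2^(8*k+3) / 4 := by
    rw [show 8*k+5 = (8*k+3)+2 by omega, CBS.div_pow_add]; norm_num
  have hda6 : a / 2^(8*k+6) = a / 2^(8*k+3) / 8 := by
    rw [show 8*k+6 = (8*k+3)+3 by omega, CBS.div_pow_add]; norm_num
  have hy3 := CBS.tb_of a (8*k+3) true ha3
  have hy4 := CBS.tb_of a (8*k+4) false ha4
  have hy5 := CBS.tb_of a (8*k+5) true ha5
  have hy6 := CBS.tb_of a (8*k+6) false ha6
  rw [hda4] at hy4; rw [hda5] at hy5; rw [hda6] at hy6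
  simp only [CBS.nb, Bool.cond_true, Bool.cond_false] at hy3 hy4 hy5 hy6
  have hyalt : a / 2^(8*k+3) < 16 := by
    apply Nat.div_lt_of_lt_mul
    rw [hP3]; rw [hP7] at haLT; omega
  have haH : a / 2^(8*k+3) = 5 := by
    obtain ⟨ya, hya⟩ : ∃ y, a / 2^(8*k+3) = y := ⟨_, rfl⟩
    rw [hya] at hy3 hy4 hy5 hy6 hyalt ⊢
    omega
  -- header of b
  have hdb4 : b / 2^(8*k+4) = b / 2^(8*k+3) / 2 := by
    rw [show 8*k+4 = (8*k+3)+1 by omega, CBS.div_pow_add]; norm_num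
  have hdb5 : b / 2^(8*k+5) = b / 2^(8*k+3) / 4 := by
    rw [show 8*k+5 = (8*k+3)+2 by omega, CBS.div_pow_add]; norm_num
  have hdb6 : b / 2^(8*k+6) = b / 2^(8*k+3) / 8 := by
    rw [show 8*k+6 = (8*k+3)+3 by omega, CBS.div_pow_add]; norm_num
  have hz3 := CBS.tb_of b (8*k+3) false hb3
  have hz4 := CBS.tb_of b (8*k+4) false hb4
  have hz5 := CBS.tb_of b (8*k+5) false hb5
  have hz6 := CBS.tb_of b (8*k+6) false hb6
  rw [hdb4] at hz4; rw [hdb5] at hz5; rw [hdb6] at hz6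
  simp only [CBS.nb, Bool.cond_true, Bool.cond_false] at hz3 hz4 hz5 hz6
  have hzblt : b / 2^(8*k+3) < 16 := by
    apply Nat.div_lt_of_lt_mul
    rw [hP3]; rw [hP7] at hbLT; omega
  have hbH : b / 2^(8*k+3) = 0 := by
    obtain ⟨zb, hzb⟩ : ∃ y, b / 2^(8*k+3) = y := ⟨_, rfl⟩
    rw [hzb] at hz3 hz4 hz5 hz6 hzblt ⊢
    omega
  -- header of u
  set ck : ℕ := if 2^(8*k+3) ≤ a % 2^(8*k+3) + b % 2^(8*k+3) then 1 else 0 with hck_def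
  have hckle : ck ≤ 1 := by rw [hck_def]; split <;> omega
  have huH : u / 2^(8*k+3) = 5 + ck := by
    rw [hu_def, Nat.add_div (Nat.pow_pos (n := _) (by norm_num)), haH, hbH, ← hck_def]
  have hudiv : u/8/256^k = 5 + ck := by
    rw [Nat.div_div_eq_div_mul, ← hP3]; exact huH
  have hubit : u.testBit (8*k+6) = false := by
    apply CBS.tb_in
    have h6 : u / 2^(8*k+6) = u / 2^(8*k+3) / 8 := by
      rw [show 8*k+6 = (8*k+3)+3 by omega, CBS.div_pow_add]; norm_num
    rw [h6, huH]
    simp only [CBS.nb, Bool.cond_false]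
    omega
  -- digit facts of u
  have hUfacts : ∀ j : Fin k,
      (u/8/256^(j:ℕ) % 256) / 32 % 2 = CBS.nb (s j) ∧
      (u/8/256^(j:ℕ) % 256) / 2 % 2 = CBS.nb (s' j) := by
    intro j
    have hpos : 0 < 8*256^(j:ℕ) := by positivity
    have hA := haBlk j
    have hBf := hbBlk j
    have a5 : (a/8/256^(j:ℕ) % 256).testBit 5 = s j := by
      rw [← CBS.block_read a (j:ℕ) 5 (3+8*(j:ℕ)+5) (by norm_num) rfl]; exact hA.1
    have a4 : (a/8/256^(j:ℕ) % 256).testBit 4 = false := by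
      rw [← CBS.block_read a (j:ℕ) 4 (3+8*(j:ℕ)+4) (by norm_num) rfl]; exact hA.2.1
    have a1 : (a/8/256^(j:ℕ) % 256).testBit 1 = false := by
      rw [← CBS.block_read a (j:ℕ) 1 (3+8*(j:ℕ)+1) (by norm_num) rfl]; exact hA.2.2.1
    have a0 : (a/8/256^(j:ℕ) % 256).testBit 0 = false := by
      rw [← CBS.block_read a (j:ℕ) 0 (3+8*(j:ℕ)) (by norm_num) (by omega)]; exact hA.2.2.2
    have b1 : (b/8/256^(j:ℕ) % 256).testBit 1 = s' j := by
      rw [← CBS.block_read b (j:ℕ) 1 (3+8*(j:ℕ)+1) (by norm_num) rfl]; exact hBf.1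
    have b5 : (b/8/256^(j:ℕ) % 256).testBit 5 = false := by
      rw [← CBS.block_read b (j:ℕ) 5 (3+8*(j:ℕ)+5) (by norm_num) rfl]; exact hBf.2.1
    have b4 : (b/8/256^(j:ℕ) % 256).testBit 4 = false := by
      rw [← CBS.block_read b (j:ℕ) 4 (3+8*(j:ℕ)+4) (by norm_num) rfl]; exact hBf.2.2.1
    have b0 : (b/8/256^(j:ℕ) % 256).testBit 0 = false := by
      rw [← CBS.block_read b (j:ℕ) 0 (3+8*(j:ℕ)) (by norm_num) (by omega)]; exact hBf.2.2.2
    have a5' := CBS.tb_of _ _ _ a5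
    have a4' := CBS.tb_of _ _ _ a4
    have a1' := CBS.tb_of _ _ _ a1
    have a0' := CBS.tb_of _ _ _ a0
    have b1' := CBS.tb_of _ _ _ b1
    have b5' := CBS.tb_of _ _ _ b5
    have b4' := CBS.tb_of _ _ _ b4
    have b0' := CBS.tb_of _ _ _ b0
    norm_num at a5' a4' a1' a0' b1' b5' b4' b0'
    simp only [CBS.nb, Bool.cond_false] at a4' a1' a0' b5' b4' b0'
    have hnbs := CBS.nb_le (s j)
    have hnbs' := CBS.nb_le (s' j)
    have hadd : (a + b) / (8*256^(j:ℕ)) = a/(8*256^(j:ℕ)) + b/(8*256^(j:ℕ))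
        + (if 8*256^(j:ℕ) ≤ a % (8*256^(j:ℕ)) + b % (8*256^(j:ℕ)) then 1 else 0) :=
      Nat.add_div hpos
    set cj : ℕ := if 8*256^(j:ℕ) ≤ a % (8*256^(j:ℕ)) + b % (8*256^(j:ℕ)) then 1 else 0
      with hcj_def
    have hcjle : cj ≤ 1 := by rw [hcj_def]; split <;> omega
    have hU : u/8/256^(j:ℕ) % 256
        = ((a/8/256^(j:ℕ) % 256) + (b/8/256^(j:ℕ) % 256) + cj) % 256 := by
      rw [hu_def, Nat.div_div_eq_div_mul, hadd,
        ← Nat.div_div_eq_div_mul a 8 (256^(j:ℕ)), ← Nat.div_div_eq_div_mul b 8 (256^(j:ℕ))]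
      omega
    obtain ⟨A, hAd⟩ : ∃ y, a/8/256^(j:ℕ) = y := ⟨_, rfl⟩
    obtain ⟨B, hBd⟩ : ∃ y, b/8/256^(j:ℕ) = y := ⟨_, rfl⟩
    rw [hAd] at a5' a4' a1' a0' hU
    rw [hBd] at b1' b5' b4' b0' hU
    constructor
    · rw [hU]; omega
    · rw [hU]; omega
  -- extraction of s, s'
  have hext_s : (fun j : Fin k => u.testBit (8*(j:ℕ)+8)) = s := by
    funext j
    rw [CBS.block_read u (j:ℕ) 5 (8*(j:ℕ)+8) (by norm_num) (by omega)]
    apply CBS.tb_in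
    have := (hUfacts j).1
    norm_num
    exact this
  have hext_s' : (fun j : Fin k => u.testBit (8*(j:ℕ)+4)) = s' := by
    funext j
    rw [CBS.block_read u (j:ℕ) 1 (8*(j:ℕ)+4) (by norm_num) (by omega)]
    apply CBS.tb_in
    have := (hUfacts j).2
    norm_num
    exact this
  have htN : ∀ (i : ℕ) (h : i < k), CBS.tN k f u i = CBS.nb (f s s' ⟨i, h⟩) := by
    intro i h
    unfold CBS.tN
    rw [dif_pos h, hext_s, hext_s']
  -- bounds and basic equations
  have hbk := CBS.borF_le k f u k
  set fF : ℕ := if 4 ≤ u % 8 then u % 8 - 4 else u % 8 + 4 with hfF_def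
  have hfFle : fF ≤ 7 := by rw [hfF_def]; split <;> omega
  have hb0 : u % 8 + 4 = fF + 8 * CBS.borF k f u 0 := by
    rw [hfF_def, show CBS.borF k f u 0 = if 4 ≤ u % 8 then 1 else 0 from rfl]
    by_cases h4 : 4 ≤ u % 8 <;> simp [h4] <;> omega
  have hDheq : CBS.DhF k f u + (5 + ck) + CBS.borF k f u k = 16 := by
    unfold CBS.DhF
    rw [hudiv]
    omega
  have hDhlb : 9 ≤ CBS.DhF k f u := by omega
  have hDhub : CBS.DhF k f u ≤ 11 := by omega
  have hRu : CBS.RF k f u = 4 + 8*((∑ i ∈ Finset.range k, CBS.XsF k f u i * 256^i)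
      + 256^k * CBS.DhF k f u) := CBS.RF_neg k f u hubit
  have hu_dec : u = u % 8 + 8 * ((∑ i ∈ Finset.range k, (u/8/256^i % 256) * 256^i)
      + 256^k * (5 + ck)) := by
    have h2 := CBS.base_decomp k (u/8)
    rw [hudiv] at h2
    conv_lhs => rw [← Nat.mod_add_div u 8, h2]
  have htel := CBS.tel k f u k
  have hsplit : (∑ i ∈ Finset.range k, (u/8/256^i % 256 + CBS.XsF k f u i) * 256^i)
      = (∑ i ∈ Finset.range k, (u/8/256^i % 256) * 256^i)
        + ∑ i ∈ Finset.range k, CBS.XsF k f u i * 256^i := by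
    rw [← Finset.sum_add_distrib]; exact Finset.sum_congr rfl (fun i _ => by ring)
  rw [hsplit] at htel
  have hkey : CBS.RF k f u + u
      = 2^(8*k+7) + (fF + 8 * ∑ i ∈ Finset.range k, CBS.MsF k f u i * 256^i) := by
    rw [hRu, hP7]
    exact CBS.main_alg fF _ _ _ _ _ _ _ u _ ck hu_dec htel hb0 hDheq
  -- more bounds
  have hMlt : ∀ i, CBS.MsF k f u i < 256 := fun i => CBS.Md_lt _ _
  have hmsumlt := CBS.sum_lt (CBS.MsF k f u) k hMlt
  have hXlt : ∀ i, CBS.XsF k f u i < 256 := fun i => CBS.Xd_lt _ _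
  have hxsumlt := CBS.sum_lt (CBS.XsF k f u) k hXlt
  obtain ⟨PD, hPDd⟩ : ∃ y, 256^k * CBS.DhF k f u = y := ⟨_, rfl⟩
  have hPDub : PD ≤ 256^k * 11 := by rw [← hPDd]; exact Nat.mul_le_mul_left _ hDhub
  have hPDlb : 256^k * 9 ≤ PD := by rw [← hPDd]; exact Nat.mul_le_mul_left _ hDhlb
  have hldef : CBS.RF k f u / 2 = 2 + 4*((∑ i ∈ Finset.range k, CBS.XsF k f u i * 256^i)
      + 256^k * CBS.DhF k f u) := by
    rw [hRu, hPDd]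
    omega
  have hllt : CBS.RF k f u / 2 < 2^(8*k+6) := by
    rw [hldef, hPDd, hP6]
    omega
  refine ⟨?_, ?_, ?_, ?_, ?_⟩
  · -- R u + u ≥ 2^L
    omega
  · -- IsMEnc of m1
    have hmeq : CBS.RF k f u + u - 2^(8*k+7)
        = fF + 8 * ∑ i ∈ Finset.range k, CBS.MsF k f u i * 256^i := by omega
    rw [hmeq]
    have hm1lt : fF + 8*∑ i ∈ Finset.range k, CBS.MsF k f u i * 256^i < 8*256^k := by
      omega
    have hhi : ∀ c : ℕ, 3 ≤ c → fF + 8*∑ i ∈ Finset.range k, CBS.MsF k f u i * 256^i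
        < 2^(8*k+c) := by
      intro c hc
      refine lt_of_lt_of_le hm1lt ?_
      rw [← hP3]
      exact Nat.pow_le_pow_right (by norm_num) (by omega)
    refine ⟨lt_of_lt_of_le (hhi 7 (by norm_num)) (le_refl _), ?_, ?_, ?_, ?_, ?_⟩
    · exact Nat.testBit_lt_two_pow (hhi 6 (by norm_num))
    · exact Nat.testBit_lt_two_pow (hhi 5 (by norm_num))
    · exact Nat.testBit_lt_two_pow (hhi 4 (by norm_num))
    · exact Nat.testBit_lt_two_pow (hhi 3 (by norm_num))
    · intro i
      have ht := htN (i:ℕ) i.isLt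
      have htle := CBS.tN_le k f u (i:ℕ)
      have hmod4 : CBS.MsF k f u (i:ℕ) % 4 = 2 * CBS.tN k f u (i:ℕ) := CBS.Md_mod4 _ _ htle
      have hdiv16 : CBS.MsF k f u (i:ℕ) / 16 % 4 = 0 := CBS.Md_div16 _ _
      have hnb := CBS.nb_le (f s s' i)
      rw [ht, show (⟨(i:ℕ), i.isLt⟩ : Fin k) = i from rfl] at hmod4
      have hform : fF + 8 * ∑ x ∈ Finset.range k, CBS.MsF k f u x * 256^x
          = fF + 2^3*((∑ x ∈ Finset.range k, CBS.MsF k f u x * 256^x) + 256^k * 0) := by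
        ring
      refine ⟨?_, ?_, ?_, ?_⟩
      · rw [hform, CBS.digit_testBit fF 3 _ k 0 (by omega) hMlt (i:ℕ) 1 _ i.isLt
          (by norm_num) rfl]
        apply CBS.tb_in
        norm_num
        omega
      · rw [hform, CBS.digit_testBit fF 3 _ k 0 (by omega) hMlt (i:ℕ) 5 _ i.isLt
          (by norm_num) rfl]
        apply CBS.tb_in
        simp only [CBS.nb, Bool.cond_false]
        norm_num
        omega
      · rw [hform, CBS.digit_testBit fF 3 _ k 0 (by omega) hMlt (i:ℕ) 4 _ i.isLt
          (by norm_num) rfl]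
        apply CBS.tb_in
        simp only [CBS.nb, Bool.cond_false]
        norm_num
        omega
      · rw [hform, CBS.digit_testBit fF 3 _ k 0 (by omega) hMlt (i:ℕ) 0 _ i.isLt
          (by norm_num) (by omega)]
        apply CBS.tb_in
        simp only [CBS.nb, Bool.cond_false]
        norm_num
        omega
  · -- IsL0Form of R u / 2
    have hform : 2 + 4*((∑ i ∈ Finset.range k, CBS.XsF k f u i * 256^i)
        + 256^k * CBS.DhF k f u)
        = 2 + 2^2*((∑ i ∈ Finset.range k, CBS.XsF k f u i * 256^i)
        + 256^k * CBS.DhF k f u) := by ring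
    refine ⟨?_, ?_, ?_, ?_, ?_, ?_, ?_⟩
    · exact lt_of_lt_of_le hllt (Nat.pow_le_pow_right (by norm_num) (by omega))
    · rw [hldef, hform, CBS.header_testBit 2 2 _ k _ (by omega) hXlt 4 _ (by omega)]
      apply CBS.tb_in
      simp only [CBS.nb, Bool.cond_false]
      norm_num
      omega
    · rw [hldef, hform, CBS.header_testBit 2 2 _ k _ (by omega) hXlt 3 _ (by omega)]
      apply CBS.tb_in
      simp only [CBS.nb, Bool.cond_true]
      norm_num
      omega
    · rw [hldef, hform, CBS.header_testBit 2 2 _ k _ (by omega) hXlt 2 _ (by omega)]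
      apply CBS.tb_in
      simp only [CBS.nb, Bool.cond_false]
      norm_num
      omega
    · apply CBS.tb_in
      rw [hldef, hPDd]
      simp only [CBS.nb, Bool.cond_true]
      norm_num
      omega
    · apply CBS.tb_in
      rw [hldef, hPDd]
      simp only [CBS.nb, Bool.cond_false]
      norm_num
      omega
    · intro i
      have ht := htN (i:ℕ) i.isLt
      have htle := CBS.tN_le k f u (i:ℕ)
      obtain ⟨e, g, he, hg, hX⟩ := CBS.Xd_decomp
        (u/8/256^(i:ℕ) % 256 + CBS.borF k f u (i:ℕ)) (CBS.tN k f u (i:ℕ))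
      have hXf : CBS.XsF k f u (i:ℕ)
          = 76 + 128*(1 - CBS.tN k f u (i:ℕ)) + e + 16*g := hX
      refine ⟨?_, ?_, ?_, ?_⟩
      · rw [hldef, hform, CBS.digit_testBit 2 2 _ k _ (by omega) hXlt (i:ℕ) 7 _ i.isLt
          (by norm_num) (by omega)]
        apply CBS.tb_in
        rw [ht, show (⟨(i:ℕ), i.isLt⟩ : Fin k) = i from rfl] at hXf
        cases hv : f s s' i <;> rw [hv] at hXf <;>
          simp only [CBS.nb, Bool.not_true, Bool.not_false, Bool.cond_true, Bool.cond_false]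
            at hXf ⊢ <;> norm_num at hXf ⊢ <;> omega
      · rw [hldef, hform, CBS.digit_testBit 2 2 _ k _ (by omega) hXlt (i:ℕ) 6 _ i.isLt
          (by norm_num) (by omega)]
        apply CBS.tb_in
        simp only [CBS.nb, Bool.cond_true]
        norm_num
        omega
      · rw [hldef, hform, CBS.digit_testBit 2 2 _ k _ (by omega) hXlt (i:ℕ) 3 _ i.isLt
          (by norm_num) (by omega)]
        apply CBS.tb_in
        simp only [CBS.nb, Bool.cond_true]
        norm_num
        omega
      · rw [hldef, hform, CBS.digit_testBit 2 2 _ k _ (by omega) hXlt (i:ℕ) 2 _ i.isLt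
          (by norm_num) (by omega)]
        apply CBS.tb_in
        simp only [CBS.nb, Bool.cond_true]
        norm_num
        omega
  · -- m2 = 2^(8k+6)
    have hvbit : (CBS.RF k f u / 2 + 2^(8*k+6)).testBit (8*k+6) = true := by
      apply CBS.tb_in
      rw [Nat.add_div_right _ (Nat.pow_pos (n := _) (by norm_num)),
        Nat.div_eq_of_lt hllt]
      simp [CBS.nb]
    have hRv : CBS.RF k f (CBS.RF k f u / 2 + 2^(8*k+6))
        = 2*((2^(8*k+7) + 2^(8*k+6) - (CBS.RF k f u / 2 + 2^(8*k+6)))/2) :=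
      CBS.RF_pos k f _ hvbit
    rw [hRv, hldef, hPDd, hP6, hP7]
    omega
  · -- IsLEnc of l2
    have hvbit : (CBS.RF k f u / 2 + 2^(8*k+6)).testBit (8*k+6) = true := by
      apply CBS.tb_in
      rw [Nat.add_div_right _ (Nat.pow_pos (n := _) (by norm_num)),
        Nat.div_eq_of_lt hllt]
      simp [CBS.nb]
    have hRv : CBS.RF k f (CBS.RF k f u / 2 + 2^(8*k+6))
        = 2*((2^(8*k+7) + 2^(8*k+6) - (CBS.RF k f u / 2 + 2^(8*k+6)))/2) :=
      CBS.RF_pos k f _ hvbit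
    have hYlt : ∀ i, 255 - CBS.XsF k f u i < 256 := fun i => by omega
    have hysumlt := CBS.sum_lt (fun i => 255 - CBS.XsF k f u i) k hYlt
    have hyx : (∑ i ∈ Finset.range k, (255 - CBS.XsF k f u i) * 256^i)
        + (∑ i ∈ Finset.range k, CBS.XsF k f u i * 256^i) + 1 = 256^k := by
      have h1 : (∑ i ∈ Finset.range k, (255 - CBS.XsF k f u i) * 256^i)
          + (∑ i ∈ Finset.range k, CBS.XsF k f u i * 256^i)
          = ∑ i ∈ Finset.range k, 255 * 256^i := by
        rw [← Finset.sum_add_distrib]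
        refine Finset.sum_congr rfl (fun i _ => ?_)
        have hXi := hXlt i
        rw [← add_mul]
        congr 1
        omega
      rw [h1]
      exact CBS.sum255 k
    obtain ⟨PH, hPHd⟩ : ∃ y, 256^k * (31 - CBS.DhF k f u) = y := ⟨_, rfl⟩
    have hHY : PH + PD = 256^k * 31 := by
      rw [← hPHd, ← hPDd, ← Nat.mul_add,
        show (31 - CBS.DhF k f u) + CBS.DhF k f u = 31 by omega]
    have hPHub : PH ≤ 256^k * 22 := by
      rw [← hPHd]; exact Nat.mul_le_mul_left _ (by omega)
    have hl2v : CBS.RF k f (CBS.RF k f u / 2 + 2^(8*k+6)) / 2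
        = 1 + 2*((∑ i ∈ Finset.range k, (255 - CBS.XsF k f u i) * 256^i)
          + 256^k * (31 - CBS.DhF k f u)) := by
      rw [hRv, hldef, hPDd, hPHd, hP6, hP7]
      omega
    rw [hl2v]
    have hform : 1 + 2*((∑ i ∈ Finset.range k, (255 - CBS.XsF k f u i) * 256^i)
        + 256^k * (31 - CBS.DhF k f u))
        = 1 + 2^1*((∑ i ∈ Finset.range k, (255 - CBS.XsF k f u i) * 256^i)
        + 256^k * (31 - CBS.DhF k f u)) := by ring
    refine ⟨?_, ?_, ?_, ?_, ?_, ?_⟩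
    · rw [hPHd, hP7]
      omega
    · rw [hform, CBS.header_testBit 1 1 _ k _ (by omega) hYlt 5 _ (by omega)]
      apply CBS.tb_in
      simp only [CBS.nb, Bool.cond_false]
      norm_num
      omega
    · rw [hform, CBS.header_testBit 1 1 _ k _ (by omega) hYlt 4 _ (by omega)]
      apply CBS.tb_in
      simp only [CBS.nb, Bool.cond_true]
      norm_num
      omega
    · rw [hform, CBS.header_testBit 1 1 _ k _ (by omega) hYlt 3 _ (by omega)]
      apply CBS.tb_in
      simp only [CBS.nb, Bool.cond_false]
      norm_num
      omega
    · rw [hform, CBS.header_testBit 1 1 _ k _ (by omega) hYlt 2 _ (by omega)]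
      apply CBS.tb_in
      simp only [CBS.nb, Bool.cond_true]
      norm_num
      omega
    · intro i
      have ht := htN (i:ℕ) i.isLt
      have htle := CBS.tN_le k f u (i:ℕ)
      obtain ⟨e, g, he, hg, hX⟩ := CBS.Xd_decomp
        (u/8/256^(i:ℕ) % 256 + CBS.borF k f u (i:ℕ)) (CBS.tN k f u (i:ℕ))
      have hXf : CBS.XsF k f u (i:ℕ)
          = 76 + 128*(1 - CBS.tN k f u (i:ℕ)) + e + 16*g := hX
      refine ⟨?_, ?_, ?_, ?_⟩
      · rw [hform, CBS.digit_testBit 1 1 _ k _ (by omega) hYlt (i:ℕ) 7 _ i.isLt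
          (by norm_num) (by omega)]
        apply CBS.tb_in
        rw [ht, show (⟨(i:ℕ), i.isLt⟩ : Fin k) = i from rfl] at hXf
        cases hv : f s s' i <;> rw [hv] at hXf <;>
          simp only [CBS.nb, Bool.cond_true, Bool.cond_false] at hXf ⊢ <;>
          norm_num at hXf ⊢ <;> omega
      · rw [hform, CBS.digit_testBit 1 1 _ k _ (by omega) hYlt (i:ℕ) 6 _ i.isLt
          (by norm_num) (by omega)]
        apply CBS.tb_in
        simp only [CBS.nb, Bool.cond_false]
        norm_num
        omega
      · rw [hform, CBS.digit_testBit 1 1 _ k _ (by omega) hYlt (i:ℕ) 3 _ i.isLt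
          (by norm_num) (by omega)]
        apply CBS.tb_in
        simp only [CBS.nb, Bool.cond_false]
        norm_num
        omega
      · rw [hform, CBS.digit_testBit 1 1 _ k _ (by omega) hYlt (i:ℕ) 2 _ i.isLt
          (by norm_num) (by omega)]
        apply CBS.tb_in
        simp only [CBS.nb, Bool.cond_false]
        norm_num
        omega
end
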